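/- arXiv:1405.1232 — 8 statements merged into one kernel-verified Lean document; each statement's English description precedes it below -/
import Mathlib

section
/- Let G = K ⋊ H be a finite group acting on the coset space G/H. Then G is semiprimitive on G/H (i.e., every normal subgroup of G is either transitive or semiregular on G/H) if and only if for every normal subgroup M of K that is invariant under conjugation by H and with M ≠ K, the action of H on K/M by conjugation is faithful. -/
open Pointwise

/-- A subgroup `N` of `G` is transitive on `Ω`. -/
def Subgroup.IsTransitiveOn {G : Type*} [Group G] (Ω : Type*) [MulAction G Ω]
    (N : Subgroup G) : Prop :=
  ∀ a b : Ω, ∃ n ∈ N, n • a = b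

/-- A subgroup `N` of `G` is semiregular on `Ω`: all point stabilisers in `N` are trivial. -/
def Subgroup.IsSemiregularOn {G : Type*} [Group G] (Ω : Type*) [MulAction G Ω]
    (N : Subgroup G) : Prop :=
  ∀ n ∈ N, ∀ a : Ω, n • a = a → n = 1

/-- The action of `G` on `Ω` is semiprimitive: it is transitive and every normal subgroup
is transitive or semiregular. -/
def IsSemiprimitiveAction (G Ω : Type*) [Group G] [MulAction G Ω] : Prop :=
  MulAction.IsPretransitive G Ω ∧
    ∀ N : Subgroup G, N.Normal → N.IsTransitiveOn Ω ∨ N.IsSemiregularOn Ω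

/-- The subgroup of elements of `H` acting trivially (mod `M`) on `K`. -/
def auxL {G : Type*} [Group G] (K H M : Subgroup G) [hKn : K.Normal]
    (hHinv : ∀ h ∈ H, ∀ m ∈ M, h * m * h⁻¹ ∈ M) : Subgroup G where
  carrier := {l | l ∈ H ∧ ∀ k ∈ K, l * k * l⁻¹ * k⁻¹ ∈ M}
  one_mem' := ⟨H.one_mem, fun k _ => by simpa using M.one_mem⟩
  mul_mem' := by
    rintro a b ⟨haH, ha⟩ ⟨hbH, hb⟩
    refine ⟨H.mul_mem haH hbH, fun k hk => ?_⟩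
    have h1 : a * (b * k * b⁻¹ * k⁻¹) * a⁻¹ ∈ M := hHinv a haH _ (hb k hk)
    have h2 := M.mul_mem h1 (ha k hk)
    convert h2 using 1
    group
  inv_mem' := by
    rintro a ⟨haH, ha⟩
    refine ⟨H.inv_mem haH, fun k hk => ?_⟩
    have hk' : a⁻¹ * k * a ∈ K := by
      simpa [mul_assoc] using hKn.conj_mem k hk a⁻¹
    have h1 := M.inv_mem (ha (a⁻¹ * k * a) hk')
    convert h1 using 1
    group

/-- The product subgroup `M * auxL`. -/
def auxN {G : Type*} [Group G] (K H M : Subgroup G) [K.Normal]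
    (hHinv : ∀ h ∈ H, ∀ m ∈ M, h * m * h⁻¹ ∈ M) : Subgroup G where
  carrier := (M : Set G) * (auxL K H M hHinv : Set G)
  one_mem' := ⟨1, M.one_mem, 1, (auxL K H M hHinv).one_mem, mul_one 1⟩
  mul_mem' := by
    rintro _ _ ⟨m1, hm1, l1, hl1, rfl⟩ ⟨m2, hm2, l2, hl2, rfl⟩
    refine ⟨m1 * (l1 * m2 * l1⁻¹), M.mul_mem hm1 (hHinv l1 hl1.1 m2 hm2),
      l1 * l2, (auxL K H M hHinv).mul_mem hl1 hl2, ?_⟩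
    group
  inv_mem' := by
    rintro _ ⟨m, hm, l, hl, rfl⟩
    refine ⟨l⁻¹ * m⁻¹ * l⁻¹⁻¹, hHinv l⁻¹ (H.inv_mem hl.1) m⁻¹ (M.inv_mem hm), l⁻¹,
      (auxL K H M hHinv).inv_mem hl, ?_⟩
    group

/-- Theorem 2.2: for `G = K ⋊ H`, `G` is semiprimitive on `G/H` iff `H` acts faithfully
on every nontrivial `H`-invariant quotient of `K`. -/
theorem stmt0 {G : Type*} [Group G] [Finite G] (K H : Subgroup G) [K.Normal]
    (hdisj : K ⊓ H = ⊥) (hsup : K ⊔ H = ⊤) :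
    IsSemiprimitiveAction G (G ⧸ H) ↔
      ∀ M : Subgroup G, M ≤ K → M ≠ K →
        (∀ k ∈ K, ∀ m ∈ M, k * m * k⁻¹ ∈ M) →
        (∀ h ∈ H, ∀ m ∈ M, h * m * h⁻¹ ∈ M) →
        ∀ h ∈ H, (∀ k ∈ K, h * k * h⁻¹ * k⁻¹ ∈ M) → h = 1 := by
  have hKn : K.Normal := ‹K.Normal›
  have hKH : ∀ g : G, ∃ k ∈ K, ∃ h ∈ H, k * h = g := by
    intro g
    have hg : g ∈ ((K ⊔ H : Subgroup G) : Set G) := by rw [hsup]; trivial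
    rw [Subgroup.normal_mul] at hg
    exact hg
  constructor
  · rintro ⟨-, hnorm⟩ M hMK hMne hKinv hHinv h hH hcomm
    set L := auxL K H M hHinv with hLdef
    set N := auxN K H M hHinv with hNdef
    have hNnormal : N.Normal := by
      constructor
      rintro _ ⟨m, hm, l, hl, rfl⟩ g
      obtain ⟨k, hk, e, he, rfl⟩ := hKH g
      have hl' : e * l * e⁻¹ ∈ L := by
        refine ⟨H.mul_mem (H.mul_mem he hl.1) (H.inv_mem he), fun k' hk' => ?_⟩
        have hkin : e⁻¹ * k' * e ∈ K := by
          simpa [mul_assoc] using hKn.conj_mem k' hk' e⁻¹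
        have h1 : e * (l * (e⁻¹ * k' * e) * l⁻¹ * (e⁻¹ * k' * e)⁻¹) * e⁻¹ ∈ M :=
          hHinv e he _ (hl.2 _ hkin)
        convert h1 using 1
        group
      set l' := e * l * e⁻¹ with hl'def
      have hcm : k * l' * k⁻¹ * l'⁻¹ ∈ M := by
        have := M.inv_mem (hl'.2 k hk)
        convert this using 1
        group
      refine ⟨k * (e * m * e⁻¹) * k⁻¹ * (k * l' * k⁻¹ * l'⁻¹),
        M.mul_mem (hKinv k hk _ (hHinv e he m hm)) hcm, l', hl', ?_⟩
      rw [hl'def]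
      group
    rcases hnorm N hNnormal with ht | hsr
    · exfalso
      apply hMne
      refine le_antisymm hMK fun k hk => ?_
      obtain ⟨n, hn, heq⟩ := ht ((1 : G) : G ⧸ H) ((k : G) : G ⧸ H)
      rw [MulAction.Quotient.smul_mk, smul_eq_mul, mul_one] at heq
      have hmem := QuotientGroup.eq.mp heq
      obtain ⟨m, hm, l, hl, rfl⟩ := hn
      have hmk : m⁻¹ * k ∈ H := by
        have := H.mul_mem hl.1 hmem
        convert this using 1
        group
      have hmkK : m⁻¹ * k ∈ K := K.mul_mem (K.inv_mem (hMK hm)) hk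
      have : m⁻¹ * k ∈ K ⊓ H := ⟨hmkK, hmk⟩
      rw [hdisj, Subgroup.mem_bot] at this
      have hkm : m = k := by
        have h1 : m * (m⁻¹ * k) = m * 1 := by rw [this]
        simpa [mul_assoc] using h1.symm
      exact hkm ▸ hm
    · have hhN : h ∈ N := ⟨1, M.one_mem, h, ⟨hH, hcomm⟩, one_mul h⟩
      refine hsr h hhN ((1 : G) : G ⧸ H) ?_
      rw [MulAction.Quotient.smul_mk]
      exact QuotientGroup.eq.mpr (by simpa using H.inv_mem hH)
  · intro hfaith
    refine ⟨MulAction.isPretransitive_quotient G H, fun N hN => ?_⟩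
    rw [or_iff_not_imp_left]
    intro hnt
    have hKN : ¬ K ≤ N := by
      intro hKle
      apply hnt
      intro a b
      obtain ⟨x, rfl⟩ := QuotientGroup.mk_surjective a
      obtain ⟨y, rfl⟩ := QuotientGroup.mk_surjective b
      obtain ⟨k, hk, e, he, hke⟩ := hKH (y⁻¹ * x)
      refine ⟨y * k⁻¹ * y⁻¹, hKle (hKn.conj_mem _ (K.inv_mem hk) y), ?_⟩
      rw [MulAction.Quotient.smul_mk, smul_eq_mul]
      apply QuotientGroup.eq.mpr
      have hx : x = y * (k * e) := by rw [hke]; group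
      have hcalc : (y * k⁻¹ * y⁻¹ * x)⁻¹ * y = e⁻¹ := by rw [hx]; group
      rw [hcalc]
      exact H.inv_mem he
    intro n hn a ha
    obtain ⟨g, rfl⟩ := QuotientGroup.mk_surjective a
    rw [MulAction.Quotient.smul_mk, smul_eq_mul] at ha
    have hh0H : (n * g)⁻¹ * g ∈ H := QuotientGroup.eq.mp ha
    set h0 := (n * g)⁻¹ * g with hh0def
    have hh0N : h0 ∈ N := by
      have : g⁻¹ * n⁻¹ * g ∈ N := by
        have := hN.conj_mem n⁻¹ (N.inv_mem hn) g⁻¹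
        simpa [mul_assoc] using this
      convert this using 1
      rw [hh0def]
      group
    have h01 : h0 = 1 := by
      refine hfaith (N ⊓ K) inf_le_right
        (fun hEq => hKN (by rw [← hEq]; exact inf_le_left))
        (fun k hk m hm => ⟨hN.conj_mem m hm.1 k, hKn.conj_mem m hm.2 k⟩)
        (fun e he m hm => ⟨hN.conj_mem m hm.1 e, hKn.conj_mem m hm.2 e⟩)
        h0 hh0H (fun k hk => ⟨?_, ?_⟩)
      · have := N.mul_mem hh0N (hN.conj_mem h0⁻¹ (N.inv_mem hh0N) k)
        convert this using 1
        group
        exact Iff.rfl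
      · exact K.mul_mem (hKn.conj_mem k hk h0) (K.inv_mem hk)
    have : n * g = g := by
      have h2 : (n * g) * h0 = (n * g) * 1 := by rw [h01]
      simpa [hh0def, mul_assoc] using h2
    exact mul_right_cancel (this.trans (one_mul g).symm)
end

section
/- Let G = K ⋊ H be a finite group such that for every normal subgroup M of K that is H-invariant and proper in K, H acts faithfully on K/M. Then for every nontrivial normal subgroup N of H one has K = [K, N]. -/
open scoped commutatorElement

/-- For `G = K ⋊ H` (internal), if `H` acts faithfully on every nontrivial `H`-invariant
quotient of `K`, then `K = [K, N]` for every nontrivial normal subgroup `N` of `H`. -/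
theorem stmt1 {G : Type*} [Group G] [Finite G] (K H : Subgroup G) [K.Normal]
    (hdisj : K ⊓ H = ⊥) (hsup : K ⊔ H = ⊤)
    (hfaith : ∀ M : Subgroup G, M ≤ K → M ≠ K →
      (∀ k ∈ K, ∀ m ∈ M, k * m * k⁻¹ ∈ M) →
      (∀ h ∈ H, ∀ m ∈ M, h * m * h⁻¹ ∈ M) →
      ∀ h ∈ H, (∀ k ∈ K, h * k * h⁻¹ * k⁻¹ ∈ M) → h = 1) :
    ∀ N : Subgroup G, N ≤ H → N ≠ ⊥ →
      (∀ h ∈ H, ∀ n ∈ N, h * n * h⁻¹ ∈ N) → ⁅K, N⁆ = K := by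
  intro N hNH hNne hNnorm
  by_contra hne
  have hMK : ⁅K, N⁆ ≤ K := Subgroup.commutator_le_left K N
  have hKconj : ∀ k ∈ K, ∀ m ∈ ⁅K, N⁆, k * m * k⁻¹ ∈ ⁅K, N⁆ := by
    intro k hk m hm
    have hmap : (⁅K, N⁆).map (MulAut.conj k).toMonoidHom ≤ ⁅K, N⁆ := by
      rw [Subgroup.commutator_def, MonoidHom.map_closure, Subgroup.closure_le]
      rintro x ⟨y, ⟨a, ha, n, hn, rfl⟩, rfl⟩
      have h1 : ⁅k * a, n⁆ ∈ ⁅K, N⁆ :=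
        Subgroup.commutator_mem_commutator (K.mul_mem hk ha) hn
      have h2 : ⁅k, n⁆ ∈ ⁅K, N⁆ := Subgroup.commutator_mem_commutator hk hn
      have heq : (MulAut.conj k).toMonoidHom ⁅a, n⁆ = ⁅k * a, n⁆ * ⁅k, n⁆⁻¹ := by
        simp only [MulEquiv.coe_toMonoidHom, MulAut.conj_apply, commutatorElement_def]
        group
      rw [heq]
      exact Subgroup.mul_mem _ h1 (Subgroup.inv_mem _ h2)
    have := hmap ⟨m, hm, rfl⟩
    simpa using this
  have hHconj : ∀ h ∈ H, ∀ m ∈ ⁅K, N⁆, h * m * h⁻¹ ∈ ⁅K, N⁆ := by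
    intro h hh m hm
    have hmap : (⁅K, N⁆).map (MulAut.conj h).toMonoidHom ≤ ⁅K, N⁆ := by
      rw [Subgroup.map_commutator]
      apply Subgroup.commutator_mono
      · rintro x ⟨a, ha, rfl⟩
        simpa using ‹K.Normal›.conj_mem a ha h
      · rintro x ⟨n, hn, rfl⟩
        simpa using hNnorm h hh n hn
    have := hmap ⟨m, hm, rfl⟩
    simpa using this
  apply hNne
  rw [Subgroup.eq_bot_iff_forall]
  intro n hn
  refine hfaith ⁅K, N⁆ hMK hne hKconj hHconj n (hNH hn) ?_
  intro k hk
  have h1 : ⁅k, n⁆ ∈ ⁅K, N⁆ := Subgroup.commutator_mem_commutator hk hn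
  have h2 : ⁅k, n⁆⁻¹ ∈ ⁅K, N⁆ := Subgroup.inv_mem _ h1
  have heq : ⁅k, n⁆⁻¹ = n * k * n⁻¹ * k⁻¹ := by
    rw [commutatorElement_inv, commutatorElement_def]
  rwa [heq] at h2
end

section
/- Let G be a finite semiprimitive permutation group with point stabiliser H and with a soluble regular normal subgroup K. Then the centraliser of K in G is contained in K. -/
open Pointwise

/-- If `G` is a finite semiprimitive permutation group with a soluble regular normal
subgroup `K`, then `C_G(K) ≤ K`. -/
theorem stmt3 {G Ω : Type*} [Group G] [Finite G] [MulAction G Ω] [FaithfulSMul G Ω]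
    (hsp : IsSemiprimitiveAction G Ω) (K : Subgroup G) [K.Normal]
    (hsol : IsSolvable K) (htrans : K.IsTransitiveOn Ω) (hsreg : K.IsSemiregularOn Ω) :
    Subgroup.centralizer (K : Set G) ≤ K := by
  classical
  intro c hcC
  by_contra hcK
  have hKn : K.Normal := ‹K.Normal›
  -- commuting facts
  have hcomm : ∀ z ∈ Subgroup.centralizer (K : Set G), ∀ k ∈ K, z * k = k * z :=
    fun z hz k hk => (Subgroup.mem_centralizer_iff.mp hz k hk).symm
  -- the centralizer of K is closed under conjugation
  have hCn : ∀ z ∈ Subgroup.centralizer (K : Set G), ∀ y : G,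
      y * z * y⁻¹ ∈ Subgroup.centralizer (K : Set G) := by
    intro z hz y
    rw [Subgroup.mem_centralizer_iff]
    intro g hg
    have hg' : y⁻¹ * g * y ∈ K := by simpa using hKn.conj_mem g hg y⁻¹
    have hzg : (y⁻¹ * g * y) * z = z * (y⁻¹ * g * y) :=
      Subgroup.mem_centralizer_iff.mp hz _ hg'
    have := congrArg (fun w => y * w * y⁻¹) hzg
    simpa [mul_assoc] using this
  rcases isEmpty_or_nonempty Ω with hE | hNe
  · exact hcK ((eq_of_smul_eq_smul (fun x : Ω => (hE.false x).elim) : c = 1) ▸ K.one_mem)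
  obtain ⟨a⟩ := hNe
  -- R = [K,K]
  set R : Subgroup G := ⁅K, K⁆ with hRdef
  have hRnormal : R.Normal := Subgroup.commutator_normal K K
  have hRK : R ≤ K := Subgroup.commutator_le_left K K
  set B : Set Ω := (fun r : G => r • a) '' (R : Set G) with hBdef
  have haB : a ∈ B := ⟨1, R.one_mem, one_smul _ _⟩
  -- key lemma A: elements of the special form map B into B
  have hA : ∀ c' ∈ Subgroup.centralizer (K : Set G), ∀ s' ∈ K, c' • a = s' • a →
      ∀ k ∈ K, ∀ x ∈ B, (k * s'⁻¹ * k⁻¹ * c') • x ∈ B := by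
    rintro c' hc' s' hs' hcs k hk x ⟨r, hr, rfl⟩
    refine ⟨(k * s'⁻¹ * k⁻¹ * s') * (s'⁻¹ * r * s'), ?_, ?_⟩
    · refine mul_mem ?_ ?_
      · have := Subgroup.commutator_mem_commutator hk (inv_mem hs')
        simpa [commutatorElement_def] using this
      · simpa using hRnormal.conj_mem r hr s'⁻¹
    · have hc'r : c' * r = r * c' := hcomm c' hc' r (hRK hr)
      have e1 : (k * s'⁻¹ * k⁻¹ * c') * r = (k * s'⁻¹ * k⁻¹ * r) * c' := by
        rw [mul_assoc, hc'r, ← mul_assoc]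
      show ((k * s'⁻¹ * k⁻¹ * s') * (s'⁻¹ * r * s')) • a = (k * s'⁻¹ * k⁻¹ * c') • (r • a)
      calc ((k * s'⁻¹ * k⁻¹ * s') * (s'⁻¹ * r * s')) • a
          = ((k * s'⁻¹ * k⁻¹ * r) * s') • a := by
            congr 1
            group
        _ = (k * s'⁻¹ * k⁻¹ * r) • (s' • a) := mul_smul _ _ _
        _ = (k * s'⁻¹ * k⁻¹ * r) • (c' • a) := by rw [hcs]
        _ = ((k * s'⁻¹ * k⁻¹ * r) * c') • a := (mul_smul _ _ _).symm
        _ = ((k * s'⁻¹ * k⁻¹ * c') * r) • a := by rw [e1]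
        _ = (k * s'⁻¹ * k⁻¹ * c') • (r • a) := mul_smul _ _ _
  -- key lemma B: any conjugate of an element s₀⁻¹ * c₀ has the special form
  have hB2 : ∀ c₀ ∈ Subgroup.centralizer (K : Set G), ∀ s₀ ∈ K, c₀ • a = s₀ • a →
      ∀ y : G, ∃ c' ∈ Subgroup.centralizer (K : Set G), ∃ s' ∈ K, c' • a = s' • a ∧
        ∃ k ∈ K, y * (s₀⁻¹ * c₀) * y⁻¹ = k * s'⁻¹ * k⁻¹ * c' := by
    intro c₀ hc₀ s₀ hs₀ h₀ y
    obtain ⟨k, hk, hky⟩ := htrans a (y • a)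
    set h : G := k⁻¹ * y with hhdef
    have hha : h • a = a := by rw [hhdef, mul_smul, ← hky, inv_smul_smul]
    have hhia : h⁻¹ • a = a := by
      conv_lhs => rw [← hha, inv_smul_smul]
    refine ⟨h * c₀ * h⁻¹, hCn c₀ hc₀ h, h * s₀ * h⁻¹, hKn.conj_mem s₀ hs₀ h, ?_, k, hk, ?_⟩
    · simp only [mul_smul]
      rw [hhia, h₀]
    · have hc' : (h * c₀ * h⁻¹) * k⁻¹ = k⁻¹ * (h * c₀ * h⁻¹) :=
        hcomm _ (hCn c₀ hc₀ h) k⁻¹ (inv_mem hk)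
      have key : k * (h * s₀ * h⁻¹)⁻¹ * k⁻¹ * (h * c₀ * h⁻¹)
          = k * (h * s₀ * h⁻¹)⁻¹ * ((h * c₀ * h⁻¹) * k⁻¹) := by
        rw [mul_assoc (k * (h * s₀ * h⁻¹)⁻¹), hc']
      rw [key, hhdef]
      group
  -- the element g = s⁻¹ * c
  obtain ⟨s, hs, hsa⟩ := htrans a (c • a)
  have hcsa : c • a = s • a := hsa.symm
  have hcia : c⁻¹ • a = s⁻¹ • a := by
    have h1 : c • (s⁻¹ • a) = a := by
      rw [smul_smul, hcomm c hcC s⁻¹ (inv_mem hs), mul_smul, hcsa, smul_smul,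
        inv_mul_cancel, one_smul]
    have h2 := congrArg (fun z : Ω => c⁻¹ • z) h1.symm
    simpa using h2
  have hmapsto : ∀ c₀ ∈ Subgroup.centralizer (K : Set G), ∀ s₀ ∈ K, c₀ • a = s₀ • a →
      ∀ y : G, ∀ x ∈ B, (y * (s₀⁻¹ * c₀) * y⁻¹) • x ∈ B := by
    intro c₀ hc₀ s₀ hs₀ h₀ y x hx
    obtain ⟨c', hc', s', hs', hcs', k, hk, heq⟩ := hB2 c₀ hc₀ s₀ hs₀ h₀ y
    rw [heq]
    exact hA c' hc' s' hs' hcs' k hk x hx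
  set g : G := s⁻¹ * c with hgdef
  -- every conjugate of g stabilizes B
  have hsc : c⁻¹ * s = s * c⁻¹ := by
    have h3 := hcomm c hcC s⁻¹ (inv_mem hs)
    have h4 := congrArg (fun w : G => w⁻¹) h3
    simpa [mul_inv_rev] using h4.symm
  have hginv : g⁻¹ = s⁻¹⁻¹ * c⁻¹ := by
    rw [hgdef, mul_inv_rev, inv_inv, hsc]
  have hstab : ∀ y : G, y * g * y⁻¹ ∈ MulAction.stabilizer G B := by
    intro y
    rw [MulAction.mem_stabilizer_iff]
    apply subset_antisymm
    · rintro _ ⟨x, hx, rfl⟩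
      exact hmapsto c hcC s hs hcsa y x hx
    · intro x hx
      rw [Set.mem_smul_set_iff_inv_smul_mem, conj_inv, hginv]
      exact hmapsto c⁻¹ (inv_mem hcC) s⁻¹ (inv_mem hs) hcia y x hx
  -- the normal closure of g
  have hNle : Subgroup.normalClosure {g} ≤ MulAction.stabilizer G B := by
    show Subgroup.closure (Group.conjugatesOfSet {g}) ≤ MulAction.stabilizer G B
    rw [Subgroup.closure_le]
    intro x hx
    rcases Group.mem_conjugatesOfSet_iff.mp hx with ⟨b, hb, hconj⟩
    rcases Set.mem_singleton_iff.mp hb with rfl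
    rcases isConj_iff.mp hconj with ⟨y, rfl⟩
    exact hstab y
  have hgN : g ∈ Subgroup.normalClosure {g} :=
    Subgroup.subset_normalClosure (Set.mem_singleton g)
  have hga : g • a = a := by rw [hgdef, mul_smul, hcsa, inv_smul_smul]
  have hg1 : g ≠ 1 := by
    intro h
    exact hcK (inv_mul_eq_one.mp h ▸ hs)
  rcases hsp.2 _ Subgroup.normalClosure_normal with htr | hsr
  · -- the normal closure is transitive, so K = [K,K], contradicting solvability
    have hKR : K ≤ R := by
      intro k₀ hk₀
      obtain ⟨n, hnN, hna⟩ := htr a (k₀ • a)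
      have hnB : n • a ∈ B := by
        have hP := hNle hnN
        rw [MulAction.mem_stabilizer_iff] at hP
        rw [← hP]
        exact Set.smul_mem_smul_set haB
      obtain ⟨r, hr, hra⟩ := hnB
      have hra' : r • a = n • a := hra
      have h1 : k₀⁻¹ * r = 1 :=
        hsreg _ (mul_mem (inv_mem hk₀) (hRK hr)) a
          (by rw [mul_smul, hra', hna, inv_smul_smul])
      have h2 : k₀ = r := inv_mul_eq_one.mp h1
      exact h2 ▸ hr
    have hRtopK : ⁅K, K⁆ = K := le_antisymm hRK hKR
    have hmapT : Subgroup.map K.subtype ⊤ = K := by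
      rw [← MonoidHom.range_eq_map, Subgroup.range_subtype]
    have hperf : ⁅(⊤ : Subgroup K), (⊤ : Subgroup K)⁆ = ⊤ := by
      apply Subgroup.map_injective K.subtype_injective
      rw [Subgroup.map_commutator, hmapT, hRtopK]
    have hder : ∀ n, derivedSeries K n = ⊤ := by
      intro n
      induction n with
      | zero => rfl
      | succ n ih => rw [derivedSeries_succ, ih, hperf]
    obtain ⟨n, hn⟩ := hsol.solvable
    have hTB : (⊤ : Subgroup K) = ⊥ := by rw [← hder n, hn]
    have hKbot : ∀ x ∈ K, x = (1 : G) := by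
      intro x hx
      have hx' : (⟨x, hx⟩ : K) ∈ (⊥ : Subgroup K) := hTB ▸ Subgroup.mem_top _
      simpa [Subgroup.mem_bot, Subtype.ext_iff] using hx'
    have hc1 : c = 1 := by
      apply eq_of_smul_eq_smul (α := Ω)
      intro x
      obtain ⟨n, hn', hnx⟩ := htrans x (c • x)
      rw [hKbot n hn'] at hnx
      simpa using hnx.symm
    exact hcK (hc1 ▸ K.one_mem)
  · -- the normal closure cannot be semiregular since g fixes a
    exact hg1 (hsr g hgN a hga)
end

section
/- Let G be a finite semiprimitive permutation group with a soluble regular normal subgroup K. Then every transitive normal subgroup of G contains K, and every semiregular normal subgroup of G is contained in K. In particular, K is the unique regular normal subgroup of G. -/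
universe u

namespace SemiprimAux
open scoped Pointwise

variable {G : Type u} [Group G]

/-- Group-theoretic semiprimitivity relative to a "point stabilizer" `H`. -/
def SPg (H : Subgroup G) : Prop :=
  ∀ N : Subgroup G, N.Normal → N ⊔ H = ⊤ ∨ N ⊓ H = ⊥

lemma mem_sup_decomp {A B : Subgroup G} [A.Normal] {g : G} (h : g ∈ A ⊔ B) :
    ∃ a ∈ A, ∃ b ∈ B, g = a * b := by
  have h2 : g ∈ ((A : Set G) * (B : Set G)) := by
    rw [← Subgroup.normal_mul]; exact_mod_cast h
  obtain ⟨a, ha, b, hb, hab⟩ := h2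
  exact ⟨a, ha, b, hb, hab.symm⟩

lemma decomp {K H : Subgroup G} [K.Normal] (hKH : K ⊔ H = ⊤) (g : G) :
    ∃ k ∈ K, ∃ x ∈ H, g = k * x :=
  mem_sup_decomp (by rw [hKH]; trivial)

lemma decomp2 {K H : Subgroup G} [K.Normal] (hKH : K ⊔ H = ⊤) (g : G) :
    ∃ x ∈ H, ∃ k ∈ K, g = x * k := by
  have h : g ∈ H ⊔ K := by rw [sup_comm, hKH]; trivial
  have h2 : g ∈ ((H : Set G) * (K : Set G)) := by
    rw [← Subgroup.mul_normal]; exact_mod_cast h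
  obtain ⟨a, ha, b, hb, hab⟩ := h2
  exact ⟨a, ha, b, hb, hab.symm⟩

lemma commutator_le_self (K : Subgroup G) : ⁅K, K⁆ ≤ K :=
  Subgroup.commutator_le.mpr fun a ha b hb => by
    rw [commutatorElement_def]
    exact mul_mem (mul_mem (mul_mem ha hb) (inv_mem ha)) (inv_mem hb)

lemma eq_bot_of_commutator_eq_self {K : Subgroup G} (hsol : IsSolvable K)
    (h : ⁅K, K⁆ = K) : K = ⊥ := by
  have htop : ⁅(⊤ : Subgroup K), (⊤ : Subgroup K)⁆ = ⊤ := by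
    apply Subgroup.map_injective K.subtype_injective
    rw [Subgroup.map_commutator]
    have h1 : Subgroup.map K.subtype ⊤ = K := by
      rw [← MonoidHom.range_eq_map, K.range_subtype]
    rw [h1, h]
  have hds : ∀ n, derivedSeries K n = ⊤ := by
    intro n
    induction n with
    | zero => rfl
    | succ n ih => rw [derivedSeries_succ, ih, htop]
  obtain ⟨n, hn⟩ := hsol
  rw [hds n] at hn
  rw [Subgroup.eq_bot_iff_forall]
  intro x hx
  have hmem : (⟨x, hx⟩ : K) ∈ (⊤ : Subgroup K) := trivial
  rw [hn, Subgroup.mem_bot] at hmem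
  exact congrArg Subtype.val hmem

lemma normalCore_eq_bot {H : Subgroup G} (sp : SPg H) (hH : H ≠ ⊤) :
    H.normalCore = ⊥ := by
  rcases sp H.normalCore H.normalCore_normal with h | h
  · rw [sup_eq_right.mpr H.normalCore_le] at h
    exact absurd h hH
  · rwa [inf_eq_left.mpr H.normalCore_le] at h

lemma sp_map {H : Subgroup G} (M : Subgroup G) [M.Normal] (sp : SPg H) :
    SPg (H.map (QuotientGroup.mk' M)) := by
  intro Nb hNb
  have hsurj : Function.Surjective (QuotientGroup.mk' M) := QuotientGroup.mk'_surjective M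
  have hn : (Nb.comap (QuotientGroup.mk' M)).Normal := Subgroup.Normal.comap hNb _
  rcases sp _ hn with h | h
  · left
    have h2 := congrArg (Subgroup.map (QuotientGroup.mk' M)) h
    rwa [Subgroup.map_sup,
      Subgroup.map_comap_eq_self (by rw [MonoidHom.range_eq_top.mpr hsurj]; exact le_top),
      Subgroup.map_top_of_surjective _ hsurj] at h2
  · right
    rw [eq_bot_iff]
    intro x hx
    rw [Subgroup.mem_inf] at hx
    obtain ⟨hxN, hxH⟩ := hx
    obtain ⟨h0, hh0, rfl⟩ := hxH
    have hh0N : h0 ∈ Nb.comap (QuotientGroup.mk' M) := Subgroup.mem_comap.mpr hxN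
    have hb : h0 ∈ (Nb.comap (QuotientGroup.mk' M)) ⊓ H := Subgroup.mem_inf.mpr ⟨hh0N, hh0⟩
    rw [h, Subgroup.mem_bot] at hb
    rw [hb]
    simp

lemma map_inf_eq_bot {A B : Subgroup G} (M : Subgroup G) [M.Normal]
    (h : ∀ a ∈ A, ∀ b ∈ B, b⁻¹ * a ∈ M → a ∈ M) :
    (A.map (QuotientGroup.mk' M)) ⊓ (B.map (QuotientGroup.mk' M)) = ⊥ := by
  rw [eq_bot_iff]
  intro x hx
  rw [Subgroup.mem_inf] at hx
  obtain ⟨⟨a, ha, rfl⟩, ⟨b, hb, hba⟩⟩ := hx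
  have hmem : b⁻¹ * a ∈ M := by
    have h1 : (QuotientGroup.mk' M) (b⁻¹ * a) = 1 := by
      rw [map_mul, map_inv, hba]
      group
    rwa [← QuotientGroup.ker_mk' M, MonoidHom.mem_ker]
  have haM : a ∈ M := h a ha b hb hmem
  have : (QuotientGroup.mk' M) a = 1 := by
    rw [← MonoidHom.mem_ker, QuotientGroup.ker_mk' M]; exact haM
  rw [this]
  simp

end SemiprimAux
section part2
open SemiprimAux
open scoped commutatorElement
variable {G : Type u} [Group G]

namespace SemiprimAux

/-- If `x, y` generate commuting subgroups trivially intersecting, elementwise commute. -/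
lemma comm_of_inf_bot {A B : Subgroup G} [A.Normal] [B.Normal] (h : A ⊓ B = ⊥) :
    ∀ a ∈ A, ∀ b ∈ B, a * b = b * a := by
  intro a ha b hb
  have hA : a * b * a⁻¹ * b⁻¹ ∈ A := by
    have h2 : b * a⁻¹ * b⁻¹ ∈ A := ‹A.Normal›.conj_mem a⁻¹ (inv_mem ha) b
    have h3 : a * (b * a⁻¹ * b⁻¹) ∈ A := mul_mem ha h2
    have he : a * b * a⁻¹ * b⁻¹ = a * (b * a⁻¹ * b⁻¹) := by group
    rw [he]; exact h3
  have hB : a * b * a⁻¹ * b⁻¹ ∈ B := by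
    have h2 : a * b * a⁻¹ ∈ B := ‹B.Normal›.conj_mem b hb a
    exact mul_mem h2 (inv_mem hb)
  have hab : a * b * a⁻¹ * b⁻¹ ∈ A ⊓ B := Subgroup.mem_inf.mpr ⟨hA, hB⟩
  rw [h, Subgroup.mem_bot] at hab
  have : a * b = (a * b * a⁻¹ * b⁻¹) * (b * a) := by group
  rw [this, hab, one_mul]

/-- The abelian key step: if `K` is an abelian "regular" normal subgroup (w.r.t. `H` with
trivial normal core) and `S` is normal with `S ⊓ K = ⊥`, then `S ≤ K`. -/
lemma abelian_aux (H K S : Subgroup G) [K.Normal] [S.Normal]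
    (hKH : K ⊔ H = ⊤) (hKHb : K ⊓ H = ⊥) (hcore : H.normalCore = ⊥)
    (hab : ⁅K, K⁆ = ⊥) (hSK : S ⊓ K = ⊥) : S ≤ K := by
  have comm := comm_of_inf_bot hSK
  have comKK : ∀ k₁ ∈ K, ∀ k₂ ∈ K, k₁ * k₂ = k₂ * k₁ := by
    intro k₁ h₁ k₂ h₂
    have := Subgroup.commutator_mem_commutator h₁ h₂
    rw [hab, Subgroup.mem_bot] at this
    exact commutatorElement_eq_one_iff_mul_comm.mp this
  choose κ hκK η hηH hdec using fun g => decomp hKH g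
  intro s hs
  have hyH : (κ s)⁻¹ * s ∈ H := by
    have h0 := congrArg (fun z => (κ s)⁻¹ * z) (hdec s)
    simp only [inv_mul_cancel_left] at h0
    rw [h0]; exact hηH s
  have hy1 : (κ s)⁻¹ * s = 1 := by
    have hmem : ∀ b : G, b * ((κ s)⁻¹ * s) * b⁻¹ ∈ H := by
      intro b
      obtain ⟨x, hx, k, hk, rfl⟩ := decomp2 hKH b
      have c1 : k * (κ s)⁻¹ = (κ s)⁻¹ * k := comKK k hk (κ s)⁻¹ (inv_mem (hκK s))
      have c2 : k * s = s * k := (comm s hs k hk).symm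
      have hfix : k * ((κ s)⁻¹ * s) * k⁻¹ = (κ s)⁻¹ * s := by
        calc k * ((κ s)⁻¹ * s) * k⁻¹ = (k * (κ s)⁻¹) * s * k⁻¹ := by group
          _ = ((κ s)⁻¹ * k) * s * k⁻¹ := by rw [c1]
          _ = (κ s)⁻¹ * (k * s) * k⁻¹ := by group
          _ = (κ s)⁻¹ * (s * k) * k⁻¹ := by rw [c2]
          _ = (κ s)⁻¹ * s := by group
      have he : (x * k) * ((κ s)⁻¹ * s) * (x * k)⁻¹
          = x * (k * ((κ s)⁻¹ * s) * k⁻¹) * x⁻¹ := by group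
      rw [he, hfix]
      exact mul_mem (mul_mem hx hyH) (inv_mem hx)
    have hmem2 : (κ s)⁻¹ * s ∈ H.normalCore := hmem
    rw [hcore, Subgroup.mem_bot] at hmem2
    exact hmem2
  have : s = κ s := by
    calc s = κ s * ((κ s)⁻¹ * s) := by group
      _ = κ s := by rw [hy1, mul_one]
  rw [this]; exact hκK s

/-- Lemma A: a transitive normal subgroup intersecting the soluble regular `K` trivially
forces `K = ⊥`. -/
lemma lemA (H K T : Subgroup G) [K.Normal] [T.Normal]
    (hsol : IsSolvable K) (hKH : K ⊔ H = ⊤) (hKHb : K ⊓ H = ⊥) (sp : SPg H)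
    (hTH : T ⊔ H = ⊤) (hTK : T ⊓ K = ⊥) : K = ⊥ := by
  by_cases hH : H = ⊤
  · rw [← hKHb, hH, inf_top_eq]
  have hcore : H.normalCore = ⊥ := normalCore_eq_bot sp hH
  have comm : ∀ k ∈ K, ∀ t ∈ T, k * t = t * k := by
    intro k hk t ht
    exact (comm_of_inf_bot hTK t ht k hk).symm
  choose κ hκK η hηH hdec using fun g => decomp hKH g
  have uniq : ∀ {g k x : G}, k ∈ K → x ∈ H → g = k * x → κ g = k := by
    intro g k x hk hx hg
    have e : κ g * η g = k * x := by rw [← hdec g, hg]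
    have w : k⁻¹ * κ g = x * (η g)⁻¹ := by
      calc k⁻¹ * κ g = k⁻¹ * (κ g * η g) * (η g)⁻¹ := by group
        _ = k⁻¹ * (k * x) * (η g)⁻¹ := by rw [e]
        _ = x * (η g)⁻¹ := by group
    have hwK : k⁻¹ * κ g ∈ K := mul_mem (inv_mem hk) (hκK g)
    have hwH : k⁻¹ * κ g ∈ H := by rw [w]; exact mul_mem hx (inv_mem (hηH g))
    have hmem : k⁻¹ * κ g ∈ K ⊓ H := Subgroup.mem_inf.mpr ⟨hwK, hwH⟩
    rw [hKHb, Subgroup.mem_bot] at hmem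
    calc κ g = k * (k⁻¹ * κ g) := by group
      _ = k := by rw [hmem, mul_one]
  have anti : ∀ {t₁ t₂ : G}, t₁ ∈ T → t₂ ∈ T → κ (t₁ * t₂) = κ t₂ * κ t₁ := by
    intro t₁ t₂ h₁ h₂
    have c : t₁ * κ t₂ = κ t₂ * t₁ := (comm _ (hκK t₂) _ h₁).symm
    have e : t₁ * t₂ = κ t₂ * κ t₁ * (η t₁ * η t₂) := by
      calc t₁ * t₂ = t₁ * (κ t₂ * η t₂) := by rw [← hdec t₂]
        _ = (t₁ * κ t₂) * η t₂ := by group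
        _ = (κ t₂ * t₁) * η t₂ := by rw [c]
        _ = κ t₂ * (κ t₁ * η t₁) * η t₂ := by rw [← hdec t₁]
        _ = κ t₂ * κ t₁ * (η t₁ * η t₂) := by group
    exact uniq (mul_mem (hκK t₂) (hκK t₁)) (mul_mem (hηH t₁) (hηH t₂)) e
  have κ1 : κ (1 : G) = 1 := uniq (one_mem K) (one_mem H) (by group)
  have κinv : ∀ {t : G}, t ∈ T → κ t⁻¹ = (κ t)⁻¹ := by
    intro t ht
    have h1 : κ (t⁻¹ * t) = κ t * κ t⁻¹ := anti (inv_mem ht) ht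
    rw [inv_mul_cancel, κ1] at h1
    exact eq_inv_of_mul_eq_one_right h1.symm
  -- value of κ in terms of g and η
  have κval : ∀ g : G, g * (η g)⁻¹ = κ g := by
    intro g
    have h0 := congrArg (fun z => z * (η g)⁻¹) (hdec g)
    simp only [mul_inv_cancel_right] at h0
    exact h0
  -- T ∩ H is trivial
  have hTHb : T ⊓ H = ⊥ := by
    rw [eq_bot_iff]
    intro t ht'
    rw [Subgroup.mem_inf] at ht'
    obtain ⟨htT, htH⟩ := ht'
    have hmem : ∀ b : G, b * t * b⁻¹ ∈ H := by
      intro b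
      obtain ⟨k, hk, x, hx, rfl⟩ := decomp hKH b
      have hxtT : x * t * x⁻¹ ∈ T := ‹T.Normal›.conj_mem t htT x
      have hxtH : x * t * x⁻¹ ∈ H := mul_mem (mul_mem hx htH) (inv_mem hx)
      have hc : k * (x * t * x⁻¹) * k⁻¹ = x * t * x⁻¹ := by
        have := comm k hk _ hxtT
        calc k * (x * t * x⁻¹) * k⁻¹ = (k * (x * t * x⁻¹)) * k⁻¹ := by group
          _ = ((x * t * x⁻¹) * k) * k⁻¹ := by rw [this]
          _ = x * t * x⁻¹ := by group
      have he : (k * x) * t * (k * x)⁻¹ = k * (x * t * x⁻¹) * k⁻¹ := by group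
      rw [he, hc]
      exact hxtH
    have hmem2 : t ∈ H.normalCore := hmem
    rw [hcore, Subgroup.mem_bot] at hmem2
    rw [hmem2]; exact one_mem _
  have surj : ∀ k ∈ K, ∃ t ∈ T, κ t = k := by
    intro k hk
    obtain ⟨t, ht, x, hx, hkx⟩ := mem_sup_decomp (A := T) (B := H)
      (show k ∈ T ⊔ H by rw [hTH]; trivial)
    refine ⟨t, ht, uniq hk (inv_mem hx) ?_⟩
    rw [hkx]; group
  by_cases hKbot : K = ⊥
  · exact hKbot
  exfalso
  by_cases hab : ⁅K, K⁆ = ⊥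
  · -- abelian case
    have hTle : T ≤ K := abelian_aux H K T hKH hKHb hcore hab hTK
    have hTbot : T = ⊥ := by
      rw [eq_bot_iff]
      intro t ht
      have : t ∈ T ⊓ K := Subgroup.mem_inf.mpr ⟨ht, hTle ht⟩
      rwa [hTK] at this
    rw [hTbot, bot_sup_eq] at hTH
    exact hH hTH
  · -- nonabelian case
    have κcomm : ∀ {a b : G}, a ∈ T → b ∈ T →
        κ ⁅a, b⁆ = (κ b)⁻¹ * (κ a)⁻¹ * κ b * κ a := by
      intro a b haT hbT
      rw [commutatorElement_def]
      rw [anti (mul_mem (mul_mem haT hbT) (inv_mem haT)) (inv_mem hbT),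
          anti (mul_mem haT hbT) (inv_mem haT), anti haT hbT,
          κinv hbT, κinv haT]
      group
    rcases sp (⁅K, K⁆ ⊔ ⁅T, T⁆) inferInstance with hsup | hinf
    · -- transitive case: K = ⁅K,K⁆, contradiction with solubility
      have hT'le : ⁅T, T⁆ ≤ ⁅K, K⁆ ⊔ H := by
        rw [Subgroup.commutator_le]
        intro t₁ h₁ t₂ h₂
        have hκK' : κ ⁅t₁, t₂⁆ ∈ ⁅K, K⁆ := by
          rw [κcomm h₁ h₂]
          have hcm := Subgroup.commutator_mem_commutator
            (inv_mem (hκK t₂)) (inv_mem (hκK t₁))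
          rw [commutatorElement_def] at hcm
          simpa using hcm
        have he : (⁅t₁, t₂⁆ : G) = κ ⁅t₁, t₂⁆ * η ⁅t₁, t₂⁆ := hdec _
        rw [he]
        exact mul_mem (Subgroup.mem_sup_left hκK') (Subgroup.mem_sup_right (hηH _))
      have htop : ⁅K, K⁆ ⊔ H = ⊤ := by
        have h1 : ⁅K, K⁆ ⊔ ⁅T, T⁆ ⊔ H ≤ ⁅K, K⁆ ⊔ H :=
          sup_le (sup_le le_sup_left hT'le) le_sup_right
        rw [hsup] at h1
        exact eq_top_iff.mpr h1
      have hKK' : K ≤ ⁅K, K⁆ := by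
        intro k hk
        obtain ⟨c, hc, x, hx, hkcx⟩ := mem_sup_decomp (A := ⁅K, K⁆) (B := H)
          (show k ∈ ⁅K, K⁆ ⊔ H by rw [htop]; trivial)
        have hxK : x ∈ K := by
          have hxe : x = c⁻¹ * k := by rw [hkcx]; group
          rw [hxe]
          exact mul_mem (inv_mem (commutator_le_self K hc)) hk
        have hx1 : x ∈ K ⊓ H := Subgroup.mem_inf.mpr ⟨hxK, hx⟩
        rw [hKHb, Subgroup.mem_bot] at hx1
        rw [hkcx, hx1, mul_one]
        exact hc
      exact hKbot (eq_bot_of_commutator_eq_self hsol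
        (le_antisymm (commutator_le_self K) hKK'))
    · -- "semiregular" case: produce a nontrivial element of the intersection
      obtain ⟨c, hc, hc1⟩ : ∃ c ∈ ⁅K, K⁆, c ≠ 1 := by
        by_contra hcon
        push_neg at hcon
        exact hab (Subgroup.eq_bot_iff_forall _ |>.mpr hcon)
      have hK'le : ⁅K, K⁆ ≤ ⁅T, T⁆ ⊔ H := by
        rw [Subgroup.commutator_le]
        intro k₁ hk₁ k₂ hk₂
        obtain ⟨t₁, ht₁, hκt₁⟩ := surj k₁⁻¹ (inv_mem hk₁)
        obtain ⟨t₂, ht₂, hκt₂⟩ := surj k₂⁻¹ (inv_mem hk₂)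
        have hcomp : κ ⁅t₂, t₁⁆ = ⁅k₁, k₂⁆ := by
          rw [κcomm ht₂ ht₁, hκt₁, hκt₂, commutatorElement_def]
          group
        rw [← hcomp, ← κval ⁅t₂, t₁⁆]
        exact mul_mem
          (Subgroup.mem_sup_left (Subgroup.commutator_mem_commutator ht₂ ht₁))
          (Subgroup.mem_sup_right (inv_mem (hηH _)))
      obtain ⟨t, ht, x, hx, hctx⟩ := mem_sup_decomp (A := ⁅T, T⁆) (B := H) (hK'le hc)
      have hn : t⁻¹ * c ∈ (⁅K, K⁆ ⊔ ⁅T, T⁆) ⊓ H := by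
        refine Subgroup.mem_inf.mpr ⟨mul_mem (Subgroup.mem_sup_right (inv_mem ht))
          (Subgroup.mem_sup_left hc), ?_⟩
        have : t⁻¹ * c = x := by rw [hctx]; group
        rw [this]; exact hx
      rw [hinf, Subgroup.mem_bot] at hn
      have hct : c = t := by
        calc c = t * (t⁻¹ * c) := by group
          _ = t := by rw [hn, mul_one]
      have hcTK : c ∈ T ⊓ K := Subgroup.mem_inf.mpr
        ⟨hct ▸ commutator_le_self T ht, commutator_le_self K hc⟩
      rw [hTK, Subgroup.mem_bot] at hcTK
      exact hc1 hcTK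
end SemiprimAux
end part2
section part3
namespace SemiprimAux
variable {G : Type u} [Group G]

lemma ker_mk'_iff (M : Subgroup G) [M.Normal] (g : G) :
    (QuotientGroup.mk' M) g = 1 ↔ g ∈ M := by
  constructor
  · intro h
    have h2 : g ∈ (QuotientGroup.mk' M).ker := h
    rwa [QuotientGroup.ker_mk' M] at h2
  · intro h
    have h2 : g ∈ (QuotientGroup.mk' M).ker := by
      rw [QuotientGroup.ker_mk' M]; exact h
    exact h2

/-- Part (1), group-theoretically: transitive normal subgroups contain `K`. -/
lemma one_g (H K : Subgroup G) [K.Normal]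
    (hsol : IsSolvable K) (hKH : K ⊔ H = ⊤) (hKHb : K ⊓ H = ⊥) (sp : SPg H)
    (T : Subgroup G) [T.Normal] (hTH : T ⊔ H = ⊤) : K ≤ T := by
  haveI hMn : (K ⊓ T).Normal := by
    constructor
    intro n hn g
    rw [Subgroup.mem_inf] at hn ⊢
    exact ⟨‹K.Normal›.conj_mem n hn.1 g, ‹T.Normal›.conj_mem n hn.2 g⟩
  set M := K ⊓ T with hM
  set π := QuotientGroup.mk' M with hπdef
  have hπ : Function.Surjective π := QuotientGroup.mk'_surjective M
  haveI hKb : (K.map π).Normal := Subgroup.Normal.map ‹K.Normal› π hπ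
  haveI hTb : (T.map π).Normal := Subgroup.Normal.map ‹T.Normal› π hπ
  haveI : Group.IsSolvable K := hsol
  haveI hKbsol : IsSolvable (K.map π) := solvable_of_surjective (π.subgroupMap_surjective K)
  have hKHb2 : K.map π ⊔ H.map π = ⊤ := by
    rw [← Subgroup.map_sup, hKH, Subgroup.map_top_of_surjective _ hπ]
  have hKHbb : K.map π ⊓ H.map π = ⊥ := by
    apply map_inf_eq_bot
    intro k hk h hh hw
    have hwK : h⁻¹ * k ∈ K := (inf_le_left : K ⊓ T ≤ K) hw
    have hhK : h ∈ K := by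
      have : h = k * (h⁻¹ * k)⁻¹ := by group
      rw [this]; exact mul_mem hk (inv_mem hwK)
    have : h ∈ K ⊓ H := Subgroup.mem_inf.mpr ⟨hhK, hh⟩
    rw [hKHb, Subgroup.mem_bot] at this
    rw [this, inv_one, one_mul] at hw
    exact hw
  have hTHb2 : T.map π ⊔ H.map π = ⊤ := by
    rw [← Subgroup.map_sup, hTH, Subgroup.map_top_of_surjective _ hπ]
  have hTKb : T.map π ⊓ K.map π = ⊥ := by
    apply map_inf_eq_bot
    intro t ht k hk hw
    have hwT : k⁻¹ * t ∈ T := (inf_le_right : K ⊓ T ≤ T) hw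
    have hkT : k ∈ T := by
      have : k = t * (k⁻¹ * t)⁻¹ := by group
      rw [this]; exact mul_mem ht (inv_mem hwT)
    have hkM : k ∈ M := Subgroup.mem_inf.mpr ⟨hk, hkT⟩
    have : t = k * (k⁻¹ * t) := by group
    rw [this]; exact mul_mem hkM hw
  have hKmap : K.map π = ⊥ :=
    lemA (H.map π) (K.map π) (T.map π) hKbsol hKHb2 hKHbb (sp_map M sp) hTHb2 hTKb
  intro k hk
  have : π k ∈ K.map π := Subgroup.mem_map_of_mem π hk
  rw [hKmap, Subgroup.mem_bot] at this
  rw [ker_mk'_iff M k] at this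
  exact (inf_le_right : K ⊓ T ≤ T) this

/-- Quotient reduction step for part (2). -/
lemma quot_reduce [Finite G] (H K S M : Subgroup G) [K.Normal] [S.Normal] [M.Normal]
    (hsol : IsSolvable K) (hKH : K ⊔ H = ⊤) (hKHb : K ⊓ H = ⊥) (sp : SPg H)
    (hMK : M ≤ K)
    (hSH' : ∀ s ∈ S, ∀ h ∈ H, h⁻¹ * s ∈ M → s ∈ M)
    (hrec : ∀ (H' K' S' : Subgroup (G ⧸ M)), K'.Normal → IsSolvable K' →
      K' ⊔ H' = ⊤ → K' ⊓ H' = ⊥ → SPg H' → S'.Normal → S' ⊓ H' = ⊥ → S' ≤ K') :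
    S ≤ K := by
  set π := QuotientGroup.mk' M with hπdef
  have hπ : Function.Surjective π := QuotientGroup.mk'_surjective M
  haveI hKb : (K.map π).Normal := Subgroup.Normal.map ‹K.Normal› π hπ
  haveI hSb : (S.map π).Normal := Subgroup.Normal.map ‹S.Normal› π hπ
  haveI : Group.IsSolvable K := hsol
  haveI hKbsol : IsSolvable (K.map π) := solvable_of_surjective (π.subgroupMap_surjective K)
  have hKHb2 : K.map π ⊔ H.map π = ⊤ := by
    rw [← Subgroup.map_sup, hKH, Subgroup.map_top_of_surjective _ hπ]
  have hKHbb : K.map π ⊓ H.map π = ⊥ := by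
    apply map_inf_eq_bot
    intro k hk h hh hw
    have hwK : h⁻¹ * k ∈ K := hMK hw
    have hhK : h ∈ K := by
      have : h = k * (h⁻¹ * k)⁻¹ := by group
      rw [this]; exact mul_mem hk (inv_mem hwK)
    have : h ∈ K ⊓ H := Subgroup.mem_inf.mpr ⟨hhK, hh⟩
    rw [hKHb, Subgroup.mem_bot] at this
    rw [this, inv_one, one_mul] at hw
    exact hw
  have hSHbb : S.map π ⊓ H.map π = ⊥ := by
    apply map_inf_eq_bot
    intro s hs h hh hw
    exact hSH' s hs h hh hw
  have hle : S.map π ≤ K.map π :=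
    hrec (H.map π) (K.map π) (S.map π) hKb hKbsol hKHb2 hKHbb (sp_map M sp) hSb hSHbb
  intro s hs
  have : π s ∈ K.map π := hle (Subgroup.mem_map_of_mem π hs)
  obtain ⟨k, hk, hks⟩ := this
  have hw : k⁻¹ * s ∈ M := by
    rw [← ker_mk'_iff M]
    rw [map_mul, map_inv, hks]
    exact inv_mul_cancel _
  have : s = k * (k⁻¹ * s) := by group
  rw [this]
  exact mul_mem hk (hMK hw)

lemma card_quot_lt [Finite G] (M : Subgroup G) [M.Normal] (hM : M ≠ ⊥) :
    Nat.card (G ⧸ M) < Nat.card G := by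
  have h1 : Nat.card G = Nat.card (G ⧸ M) * Nat.card M :=
    Subgroup.card_eq_card_quotient_mul_card_subgroup M
  have h2 : 1 < Nat.card M := (Subgroup.one_lt_card_iff_ne_bot M).mpr hM
  have h3 : 0 < Nat.card (G ⧸ M) := Nat.card_pos
  calc Nat.card (G ⧸ M) < Nat.card (G ⧸ M) * Nat.card M := by nlinarith
    _ = Nat.card G := h1.symm

/-- Part (2), group-theoretically: semiregular normal subgroups are contained in `K`. -/
lemma two_g : ∀ (n : ℕ) {G : Type u} [Group G] [Finite G] (H K S : Subgroup G),
    Nat.card G ≤ n → ∀ (_ : K.Normal) (_ : S.Normal), IsSolvable K → K ⊔ H = ⊤ →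
    K ⊓ H = ⊥ → SPg H → S ⊓ H = ⊥ → S ≤ K := by
  intro n
  induction n with
  | zero =>
    intro G _ _ H K S hcard _ _ _ _ _ _ _
    have : 0 < Nat.card G := Nat.card_pos
    omega
  | succ n IH =>
    intro G _ _ H K S hcard hKn hSn hsol hKH hKHb sp hSHb
    haveI := hKn; haveI := hSn
    by_cases hH : H = ⊤
    · have hS : S = ⊥ := by rw [← hSHb, hH, inf_top_eq]
      rw [hS]; exact bot_le
    have hcore : H.normalCore = ⊥ := normalCore_eq_bot sp hH
    by_cases hC : S ⊓ K = ⊥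
    · -- S and K intersect trivially
      rcases sp (S ⊔ ⁅K, K⁆) inferInstance with hsup | hinf
      · -- S ⊔ K' transitive: apply one_g, derive contradiction
        exfalso
        have hKle : K ≤ S ⊔ ⁅K, K⁆ := one_g H K hsol hKH hKHb sp _ hsup
        have hKK' : K ≤ ⁅K, K⁆ := by
          intro k hk
          obtain ⟨s, hs, y, hy, hky⟩ := mem_sup_decomp (hKle hk)
          have hsK : s ∈ K := by
            have : s = k * y⁻¹ := by rw [hky]; group
            rw [this]; exact mul_mem hk (inv_mem (commutator_le_self K hy))
          have : s ∈ S ⊓ K := Subgroup.mem_inf.mpr ⟨hs, hsK⟩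
          rw [hC, Subgroup.mem_bot] at this
          rw [hky, this, one_mul]
          exact hy
        have hKbot : K = ⊥ := eq_bot_of_commutator_eq_self hsol
          (le_antisymm (commutator_le_self K) hKK')
        rw [hKbot, bot_sup_eq] at hKH
        exact hH hKH
      · by_cases hab : ⁅K, K⁆ = ⊥
        · exact abelian_aux H K S hKH hKHb hcore hab hC
        · -- quotient by ⁅K,K⁆
          have hlt : Nat.card (G ⧸ ⁅K, K⁆) < Nat.card G := card_quot_lt _ hab
          apply quot_reduce H K S ⁅K, K⁆ hsol hKH hKHb sp (commutator_le_self K)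
          · intro s hs h hh hw
            have hhm : h = s * (h⁻¹ * s)⁻¹ := by group
            have hhSK' : h ∈ S ⊔ ⁅K, K⁆ := by
              rw [hhm]
              exact mul_mem (Subgroup.mem_sup_left hs) (Subgroup.mem_sup_right (inv_mem hw))
            have : h ∈ (S ⊔ ⁅K, K⁆) ⊓ H := Subgroup.mem_inf.mpr ⟨hhSK', hh⟩
            rw [hinf, Subgroup.mem_bot] at this
            rw [this, inv_one, one_mul] at hw
            exact hw
          · intro H' K' S' h1 h2 h3 h4 h5 h6 h7
            exact IH H' K' S' (by omega) h1 h6 h2 h3 h4 h5 h7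
    · -- S ⊓ K nontrivial: quotient by it
      haveI hCn : (S ⊓ K).Normal := by
        constructor
        intro x hx g
        rw [Subgroup.mem_inf] at hx ⊢
        exact ⟨hSn.conj_mem x hx.1 g, hKn.conj_mem x hx.2 g⟩
      have hlt : Nat.card (G ⧸ (S ⊓ K)) < Nat.card G := card_quot_lt _ hC
      apply quot_reduce H K S (S ⊓ K) hsol hKH hKHb sp (inf_le_right : S ⊓ K ≤ K)
      · intro s hs h hh hw
        have hwS : h⁻¹ * s ∈ S := (inf_le_left : S ⊓ K ≤ S) hw
        have hhS : h ∈ S := by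
          have : h = s * (h⁻¹ * s)⁻¹ := by group
          rw [this]; exact mul_mem hs (inv_mem hwS)
        have : h ∈ S ⊓ H := Subgroup.mem_inf.mpr ⟨hhS, hh⟩
        rw [hSHb, Subgroup.mem_bot] at this
        rw [this, inv_one, one_mul] at hw
        exact hw
      · intro H' K' S' h1 h2 h3 h4 h5 h6 h7
        exact IH H' K' S' (by omega) h1 h6 h2 h3 h4 h5 h7

end SemiprimAux
end part3
section bridge
open SemiprimAux

variable {G : Type u} [Group G]

lemma transitive_sup_stab {Ω : Type*} [MulAction G Ω] (a : Ω) {N : Subgroup G}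
    (h : N.IsTransitiveOn Ω) : N ⊔ MulAction.stabilizer G a = ⊤ := by
  rw [eq_top_iff]
  intro g _
  obtain ⟨n, hn, hna⟩ := h a (g • a)
  have hstab : n⁻¹ * g ∈ MulAction.stabilizer G a := by
    rw [MulAction.mem_stabilizer_iff, mul_smul, ← hna, inv_smul_smul]
  have : g = n * (n⁻¹ * g) := by group
  rw [this]
  exact mul_mem (Subgroup.mem_sup_left hn) (Subgroup.mem_sup_right hstab)

lemma semiregular_inf_stab {Ω : Type*} [MulAction G Ω] (a : Ω) {N : Subgroup G}
    (h : N.IsSemiregularOn Ω) : N ⊓ MulAction.stabilizer G a = ⊥ := by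
  rw [eq_bot_iff]
  intro x hx
  rw [Subgroup.mem_inf] at hx
  rw [Subgroup.mem_bot]
  exact h x hx.1 a (MulAction.mem_stabilizer_iff.mp hx.2)

/-- Theorem 2.4: if `G` is a finite semiprimitive group with a soluble regular normal
subgroup `K`, then every transitive normal subgroup contains `K`, every semiregular normal
subgroup is contained in `K`, and `K` is the unique regular normal subgroup. -/
theorem stmt4 {G Ω : Type*} [Group G] [Finite G] [MulAction G Ω] [FaithfulSMul G Ω]
    (hsp : IsSemiprimitiveAction G Ω) (K : Subgroup G) [K.Normal]
    (hsol : IsSolvable K) (htrans : K.IsTransitiveOn Ω) (hsreg : K.IsSemiregularOn Ω) :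
    (∀ T : Subgroup G, T.Normal → T.IsTransitiveOn Ω → K ≤ T) ∧
    (∀ S : Subgroup G, S.Normal → S.IsSemiregularOn Ω → S ≤ K) ∧
    (∀ K' : Subgroup G, K'.Normal → K'.IsTransitiveOn Ω → K'.IsSemiregularOn Ω → K' = K) := by
  rcases isEmpty_or_nonempty Ω with hΩ | hΩ
  · -- empty: G is trivial by faithfulness
    have hall : ∀ g : G, g = 1 := by
      intro g
      apply eq_of_smul_eq_smul (α := Ω) (M := G)
      intro ω
      exact (hΩ.false ω).elim
    have hsub : ∀ (A B : Subgroup G), A ≤ B := by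
      intro A B x _
      rw [hall x]; exact one_mem B
    exact ⟨fun T _ _ => hsub K T, fun S _ _ => hsub S K,
      fun K' _ _ _ => le_antisymm (hsub K' K) (hsub K K')⟩
  · obtain ⟨a⟩ := hΩ
    set H := MulAction.stabilizer G a with hHdef
    have hKH : K ⊔ H = ⊤ := transitive_sup_stab a htrans
    have hKHb : K ⊓ H = ⊥ := semiregular_inf_stab a hsreg
    have sp : SPg H := by
      intro N hN
      rcases hsp.2 N hN with h | h
      · exact Or.inl (transitive_sup_stab a h)
      · exact Or.inr (semiregular_inf_stab a h)
    have part1 : ∀ T : Subgroup G, T.Normal → T.IsTransitiveOn Ω → K ≤ T := by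
      intro T hTn hTt
      haveI := hTn
      exact one_g H K hsol hKH hKHb sp T (transitive_sup_stab a hTt)
    have part2 : ∀ S : Subgroup G, S.Normal → S.IsSemiregularOn Ω → S ≤ K := by
      intro S hSn hSr
      exact two_g (Nat.card G) H K S (le_refl _) ‹K.Normal› hSn hsol hKH hKHb sp
        (semiregular_inf_stab a hSr)
    exact ⟨part1, part2, fun K' hn ht hr =>
      le_antisymm (part2 K' hn hr) (part1 K' hn ht)⟩
end bridge
end

section
/- Let G be a finite semiprimitive permutation group with a soluble regular normal subgroup K. Then every nilpotent normal subgroup of G is contained in K; in particular, the Fitting subgroup of G equals the Fitting subgroup of K. -/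
section Aux

open Subgroup

/-- nontrivial nilpotent groups have nontrivial center -/
private lemma aux_exists_central {H : Type*} [Group H] [Group.IsNilpotent H] [Nontrivial H] :
    ∃ z : H, z ≠ 1 ∧ ∀ y : H, y * z = z * y := by
  have hc : Subgroup.center H ≠ ⊥ := by
    intro hbot
    obtain ⟨n, hn⟩ := Group.IsNilpotent.nilpotent (G := H)
    have hall : ∀ m, Subgroup.upperCentralSeries H m = ⊥ := by
      intro m
      induction m with
      | zero => exact Subgroup.upperCentralSeries_zero H
      | succ m ihm =>
        rw [eq_bot_iff]
        intro x hx
        rw [Subgroup.mem_upperCentralSeries_succ_iff] at hx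
        have hxc : x ∈ Subgroup.center H := by
          rw [Subgroup.mem_center_iff]
          intro y
          have := hx y
          rw [ihm, Subgroup.mem_bot] at this
          have h1 : x * y * x⁻¹ = y := by
            have := mul_eq_one_iff_eq_inv.mp this
            rw [this]; group
          calc y * x = (x * y * x⁻¹) * x := by rw [h1]
            _ = x * y := by group
        rw [hbot] at hxc
        exact hxc
    obtain ⟨x, hx1⟩ := exists_ne (1 : H)
    have hbt : (⊥ : Subgroup H) = ⊤ := by rw [← hall n, hn]
    exact hx1 (Subgroup.mem_bot.mp (hbt ▸ Subgroup.mem_top x))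
  obtain ⟨z, hzc, hz1⟩ := (Subgroup.nontrivial_iff_exists_ne_one _).mp
    ((Subgroup.nontrivial_iff_ne_bot _).mpr hc)
  exact ⟨z, hz1, fun y => Subgroup.mem_center_iff.mp hzc y⟩

end Aux

section Quot

variable {G : Type*} [Group G] {Ω : Type*} [MulAction G Ω]

/-- the setoid of `A`-orbits -/
private def bs (A : Subgroup G) (Ω : Type*) [MulAction G Ω] : Setoid Ω where
  r x y := ∃ a ∈ A, a • x = y
  iseqv := by
    refine ⟨fun x => ⟨1, A.one_mem, one_smul _ _⟩, ?_, ?_⟩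
    · rintro x y ⟨a, ha, rfl⟩
      exact ⟨a⁻¹, A.inv_mem ha, inv_smul_smul a x⟩
    · rintro x y z ⟨a, ha, rfl⟩ ⟨b, hb, rfl⟩
      exact ⟨b * a, A.mul_mem hb ha, (mul_smul b a x).symm ▸ rfl⟩

private lemma bs_rel {A : Subgroup G} {x y : Ω} (h : (bs A Ω).r x y) :
    ∃ a ∈ A, a • x = y := h

private def qsmul (A : Subgroup G) (hA : A.Normal) :
    G ⧸ A → Quotient (bs A Ω) → Quotient (bs A Ω) := fun q x =>
  Quotient.liftOn' q
    (fun g => Quotient.liftOn x (fun ω => Quotient.mk (bs A Ω) (g • ω))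
      (by
        rintro ω₁ ω₂ ⟨a, ha, rfl⟩
        apply Quotient.sound
        exact ⟨g * a * g⁻¹, hA.conj_mem a ha g, by
          show (g * a * g⁻¹) • g • ω₁ = g • a • ω₁
          rw [← mul_smul, ← mul_smul]; group⟩))
    (by
      intro g₁ g₂ hg
      have hg' : g₁⁻¹ * g₂ ∈ A := QuotientGroup.leftRel_apply.mp hg
      induction x using Quotient.inductionOn with
      | h ω =>
        apply Quotient.sound
        refine ⟨g₁ * (g₁⁻¹ * g₂) * g₁⁻¹, hA.conj_mem _ hg' g₁, ?_⟩
        · show _ • g₁ • ω = g₂ • ω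
          rw [← mul_smul]
          congr 1
          group)

private lemma qsmul_mk (A : Subgroup G) (hA : A.Normal) (g : G) (ω : Ω) :
    qsmul A hA (QuotientGroup.mk g) (Quotient.mk (bs A Ω) ω)
      = Quotient.mk (bs A Ω) (g • ω) := rfl

private def qact (A : Subgroup G) (hA : A.Normal) : MulAction (G ⧸ A) (Quotient (bs A Ω)) where
  smul := qsmul A hA
  one_smul x := by
    induction x using Quotient.inductionOn with
    | h ω =>
      show qsmul A hA (QuotientGroup.mk 1) (Quotient.mk _ ω) = _
      rw [qsmul_mk, one_smul]
  mul_smul q₁ q₂ x := by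
    obtain ⟨g₁, rfl⟩ := QuotientGroup.mk_surjective q₁
    obtain ⟨g₂, rfl⟩ := QuotientGroup.mk_surjective q₂
    induction x using Quotient.inductionOn with
    | h ω =>
      show qsmul A hA (QuotientGroup.mk (g₁ * g₂)) (Quotient.mk _ ω) = _
      rw [qsmul_mk, mul_smul]
      rfl

end Quot

section Part1

open Subgroup

private theorem part1 : ∀ (n : ℕ) {G : Type*} {Ω : Type*} [Group G] [Finite G] [MulAction G Ω]
    [FaithfulSMul G Ω], Nat.card G ≤ n → IsSemiprimitiveAction G Ω →
    ∀ K : Subgroup G, K.Normal → IsSolvable K → K.IsTransitiveOn Ω → K.IsSemiregularOn Ω →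
    ∀ N : Subgroup G, N.Normal → Group.IsNilpotent N → N ≤ K := by
  intro n
  induction n with
  | zero =>
    intro G Ω _ _ _ _ hcard
    have : 0 < Nat.card G := Nat.card_pos
    omega
  | succ n ih =>
    intro G Ω _ _ _ _ hcard hsp K hKn hsol htr hsr N hNn hNnil
    classical
    have hfaith : ∀ g : G, (∀ a : Ω, g • a = a) → g = 1 := fun g h =>
      eq_of_smul_eq_smul (fun a : Ω => by rw [h a, one_smul])
    rcases eq_or_ne K ⊥ with hKbot | hKbot
    · subst hKbot
      have hsub : ∀ a b : Ω, a = b := by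
        intro a b
        obtain ⟨k, hk, hk2⟩ := htr a b
        rw [Subgroup.mem_bot] at hk
        subst hk
        rw [one_smul] at hk2
        exact hk2
      intro x hx
      have : x = 1 := hfaith x (fun a => hsub _ _)
      rw [this]
      exact Subgroup.one_mem _
    · obtain ⟨k₀, hk₀K, hk₀⟩ := (Subgroup.nontrivial_iff_exists_ne_one K).mp
        ((Subgroup.nontrivial_iff_ne_bot K).mpr hKbot)
      have hΩne : Nonempty Ω := by
        by_contra h
        rw [not_nonempty_iff] at h
        exact hk₀ (hfaith k₀ (fun a => (h.false a).elim))
      obtain ⟨ω₀⟩ := hΩne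
      haveI : Finite (Subgroup G) :=
        Finite.of_injective (fun H : Subgroup G => (H : Set G)) SetLike.coe_injective
      set s : Set (Subgroup G) := {B | B.Normal ∧ B ≠ ⊥ ∧ B ≤ K} with hs
      have hKs : K ∈ s := ⟨hKn, hKbot, le_rfl⟩
      obtain ⟨A, hAs, hAmin⟩ := Set.exists_min_image s (fun B => Nat.card B)
        (Set.toFinite s) ⟨K, hKs⟩
      obtain ⟨hAn, hAbot, hAleK⟩ := hAs
      have hAminimal : ∀ B ∈ s, B ≤ A → B = A := by
        intro B hBs hBA
        exact Subgroup.eq_of_le_of_card_ge hBA (hAmin B hBs)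
      rcases lt_or_eq_of_le hAleK with hAK | hAK
      · -- quotient case
        letI MA : MulAction (G ⧸ A) (Quotient (bs A Ω)) := qact A hAn
        have hsmul_mk : ∀ (g : G) (ω : Ω),
            (QuotientGroup.mk g : G ⧸ A) • (Quotient.mk (bs A Ω) ω)
              = Quotient.mk (bs A Ω) (g • ω) := fun g ω => rfl
        -- the subgroup of elements preserving every A-orbit
        set Kr : Subgroup G :=
          { carrier := {g | ∀ x : Ω, ∃ a ∈ A, a • g • x = x}
            one_mem' := fun x => ⟨1, A.one_mem, by rw [one_smul, one_smul]⟩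
            mul_mem' := by
              intro g h hg hh x
              obtain ⟨a, ha, hax⟩ := hh x
              obtain ⟨b, hb, hbx⟩ := hg (a⁻¹ • x)
              have h1 : h • x = a⁻¹ • x := eq_inv_smul_iff.mpr hax
              refine ⟨a * b, A.mul_mem ha hb, ?_⟩
              calc (a * b) • (g * h) • x = a • b • g • h • x := by
                    simp only [mul_smul]
                _ = a • b • g • a⁻¹ • x := by rw [h1]
                _ = a • a⁻¹ • x := by rw [hbx]
                _ = x := smul_inv_smul _ _
            inv_mem' := by
              intro g hg x
              obtain ⟨a, ha, hax⟩ := hg (g⁻¹ • x)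
              have h1 : a • x = g⁻¹ • x := by rw [← hax, smul_inv_smul]
              refine ⟨a⁻¹, A.inv_mem ha, ?_⟩
              rw [← h1, inv_smul_smul] } with hKrdef
        have hmemKr : ∀ g : G, g ∈ Kr ↔ ∀ x : Ω, ∃ a ∈ A, a • g • x = x := fun g => Iff.rfl
        have hKrnormal : Kr.Normal := by
          constructor
          intro g hg c
          rw [hmemKr] at hg ⊢
          intro x
          obtain ⟨a, ha, hax⟩ := hg (c⁻¹ • x)
          refine ⟨c * a * c⁻¹, hAn.conj_mem a ha c, ?_⟩
          calc (c * a * c⁻¹) • (c * g * c⁻¹) • x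
              = c • a • c⁻¹ • c • g • c⁻¹ • x := by
                simp only [mul_smul]
            _ = c • a • g • c⁻¹ • x := by rw [inv_smul_smul]
            _ = c • c⁻¹ • x := by rw [hax]
            _ = x := smul_inv_smul _ _
        have hAKr : A ≤ Kr := by
          intro a ha
          rw [hmemKr]
          intro x
          exact ⟨a⁻¹, A.inv_mem ha, inv_smul_smul _ _⟩
        have hKrA : Kr ≤ A := by
          rcases hsp.2 Kr hKrnormal with htrKr | hsrKr
          · exfalso
            have hKA : K ≤ A := by
              intro k hk
              obtain ⟨g, hgKr, hgk⟩ := htrKr ω₀ (k • ω₀)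
              obtain ⟨a, ha, hax⟩ := (hmemKr g).mp hgKr ω₀
              have h1 : (a * k) • ω₀ = ω₀ := by rw [mul_smul, ← hgk, hax]
              have h2 := hsr (a * k) (K.mul_mem (hAleK ha) hk) ω₀ h1
              have h3 : k = a⁻¹ := by
                rw [← one_mul k, ← inv_mul_cancel a, mul_assoc, h2, mul_one]
              rw [h3]
              exact A.inv_mem ha
            exact lt_irrefl A (lt_of_lt_of_le hAK hKA)
          · intro g hg
            obtain ⟨a, ha, hax⟩ := (hmemKr g).mp hg ω₀
            have h1 := hsrKr (a * g) (Kr.mul_mem (hAKr ha) hg) ω₀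
              (by rw [mul_smul]; exact hax)
            have h3 : g = a⁻¹ := by
              rw [← one_mul g, ← inv_mul_cancel a, mul_assoc, h1, mul_one]
            rw [h3]
            exact A.inv_mem ha
        letI FS : FaithfulSMul (G ⧸ A) (Quotient (bs A Ω)) := by
          constructor
          intro q₁ q₂ hq
          obtain ⟨g₁, rfl⟩ := QuotientGroup.mk_surjective q₁
          obtain ⟨g₂, rfl⟩ := QuotientGroup.mk_surjective q₂
          have hmem : g₂⁻¹ * g₁ ∈ Kr := by
            rw [hmemKr]
            intro x
            have h2 : Quotient.mk (bs A Ω) (g₁ • x) = Quotient.mk (bs A Ω) (g₂ • x) := by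
              rw [← hsmul_mk, ← hsmul_mk]
              exact hq (Quotient.mk (bs A Ω) x)
            obtain ⟨a, ha, hax⟩ := Quotient.exact h2
            have hconj : g₂⁻¹ * a * g₂ ∈ A := by
              have := hAn.conj_mem a ha g₂⁻¹
              simpa using this
            refine ⟨g₂⁻¹ * a * g₂, hconj, ?_⟩
            calc (g₂⁻¹ * a * g₂) • (g₂⁻¹ * g₁) • x
                = g₂⁻¹ • a • g₂ • g₂⁻¹ • g₁ • x := by
                  simp only [mul_smul]
              _ = g₂⁻¹ • a • g₁ • x := by rw [smul_inv_smul]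
              _ = g₂⁻¹ • g₂ • x := by rw [hax]
              _ = x := inv_smul_smul _ _
          exact ((QuotientGroup.eq (s := A)).mpr (hKrA hmem)).symm
        have hsp' : IsSemiprimitiveAction (G ⧸ A) (Quotient (bs A Ω)) := by
          constructor
          · constructor
            intro x y
            induction x using Quotient.inductionOn with
            | h a =>
            induction y using Quotient.inductionOn with
            | h b =>
            obtain ⟨g, hg⟩ := hsp.1.exists_smul_eq a b
            exact ⟨QuotientGroup.mk g, by rw [hsmul_mk, hg]⟩
          · intro N' hN'
            set M := Subgroup.comap (QuotientGroup.mk' A) N' with hMdef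
            haveI hMn : M.Normal := hN'.comap _
            have hAM : A ≤ M := by
              intro a ha
              show QuotientGroup.mk' A a ∈ N'
              have h1 : QuotientGroup.mk' A a = 1 := (QuotientGroup.eq_one_iff a).mpr ha
              rw [h1]
              exact N'.one_mem
            rcases hsp.2 M hMn with htrM | hsrM
            · left
              intro x y
              induction x using Quotient.inductionOn with
              | h a =>
              induction y using Quotient.inductionOn with
              | h b =>
              obtain ⟨m, hm, hmab⟩ := htrM a b
              exact ⟨QuotientGroup.mk m, hm, by rw [hsmul_mk, hmab]⟩
            · right
              intro n' hn' x hx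
              obtain ⟨g, rfl⟩ := QuotientGroup.mk_surjective n'
              induction x using Quotient.inductionOn with
              | h ω =>
              have h2 : Quotient.mk (bs A Ω) (g • ω) = Quotient.mk (bs A Ω) ω := by
                rw [← hsmul_mk]; exact hx
              obtain ⟨a, ha, hax⟩ := Quotient.exact h2
              have hgM : g ∈ M := hn'
              have h3 := hsrM (a * g) (M.mul_mem (hAM ha) hgM) ω
                (by rw [mul_smul]; exact hax)
              have h4 : g ∈ A := by
                have : g = a⁻¹ := by
                  rw [← one_mul g, ← inv_mul_cancel a, mul_assoc, h3, mul_one]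
                rw [this]
                exact A.inv_mem ha
              exact (QuotientGroup.eq_one_iff g).mpr h4
        set K' := Subgroup.map (QuotientGroup.mk' A) K with hK'def
        haveI hK'n : K'.Normal := hKn.map _ (QuotientGroup.mk'_surjective A)
        haveI : Group.IsSolvable K := hsol
        have hsol' : IsSolvable ↥K' :=
          solvable_of_surjective (MonoidHom.subgroupMap_surjective (QuotientGroup.mk' A) K)
        have htr' : K'.IsTransitiveOn (Quotient (bs A Ω)) := by
          intro x y
          induction x using Quotient.inductionOn with
          | h a =>
          induction y using Quotient.inductionOn with
          | h b =>
          obtain ⟨k, hk, hkab⟩ := htr a b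
          exact ⟨QuotientGroup.mk k, Subgroup.mem_map.mpr ⟨k, hk, rfl⟩, by rw [hsmul_mk, hkab]⟩
        have hsr' : K'.IsSemiregularOn (Quotient (bs A Ω)) := by
          intro n' hn' x hx
          obtain ⟨k, hkK, rfl⟩ := Subgroup.mem_map.mp hn'
          induction x using Quotient.inductionOn with
          | h ω =>
          have h2 : Quotient.mk (bs A Ω) (k • ω) = Quotient.mk (bs A Ω) ω := by
            rw [← hsmul_mk]; exact hx
          obtain ⟨a, ha, hax⟩ := Quotient.exact h2
          have h3 := hsr (a * k) (K.mul_mem (hAleK ha) hkK) ω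
            (by rw [mul_smul]; exact hax)
          have h4 : k ∈ A := by
            have : k = a⁻¹ := by
              rw [← one_mul k, ← inv_mul_cancel a, mul_assoc, h3, mul_one]
            rw [this]
            exact A.inv_mem ha
          exact (QuotientGroup.eq_one_iff k).mpr h4
        have hN'n : (Subgroup.map (QuotientGroup.mk' A) N).Normal :=
          hNn.map _ (QuotientGroup.mk'_surjective A)
        haveI := hNnil
        have hN'nil : Group.IsNilpotent ↥(Subgroup.map (QuotientGroup.mk' A) N) :=
          nilpotent_of_surjective ((QuotientGroup.mk' A).subgroupMap N)
            (MonoidHom.subgroupMap_surjective _ _)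
        have hcard' : Nat.card (G ⧸ A) ≤ n := by
          have heq := Subgroup.card_eq_card_quotient_mul_card_subgroup A
          have h2 : 1 < Nat.card A := (Subgroup.one_lt_card_iff_ne_bot A).mpr hAbot
          have hq : 0 < Nat.card (G ⧸ A) := Nat.card_pos
          have hlt : Nat.card (G ⧸ A) < Nat.card G := by
            calc Nat.card (G ⧸ A) = Nat.card (G ⧸ A) * 1 := (mul_one _).symm
              _ < Nat.card (G ⧸ A) * Nat.card A := by
                  exact mul_lt_mul_of_pos_left h2 hq
              _ = Nat.card G := heq.symm
          omega
        have hres := ih hcard' hsp' K' hK'n hsol' htr' hsr'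
          (Subgroup.map (QuotientGroup.mk' A) N) hN'n hN'nil
        intro x hx
        have hmx : QuotientGroup.mk' A x ∈ K' := hres (Subgroup.mem_map.mpr ⟨x, hx, rfl⟩)
        obtain ⟨k, hkK, hk⟩ := Subgroup.mem_map.mp hmx
        have h5 : k⁻¹ * x ∈ A := (QuotientGroup.eq (s := A)).mp hk
        have h6 := K.mul_mem hkK (hAleK h5)
        rw [← mul_assoc, mul_inv_cancel, one_mul] at h6
        exact h6
      · -- A = K : K is a minimal normal subgroup
        have hKmin : ∀ B ∈ s, B ≤ K → B = K := by rw [← hAK]; exact hAminimal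
        haveI := hKn
        have hcomm_le : ⁅K, K⁆ ≤ K := Subgroup.commutator_le_right K K
        have hKK : ⁅K, K⁆ ≠ K := by
          intro h
          have h1 : Subgroup.map K.subtype ⊤ = K := by
            rw [← MonoidHom.range_eq_map, Subgroup.range_subtype]
          have hmap : Subgroup.map K.subtype ⁅(⊤ : Subgroup K), (⊤ : Subgroup K)⁆
              = Subgroup.map K.subtype ⊤ := by
            rw [Subgroup.map_commutator, h1, h]
          have h2 : ⁅(⊤ : Subgroup K), (⊤ : Subgroup K)⁆ = ⊤ :=
            Subgroup.map_injective (Subgroup.subtype_injective K) hmap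
          haveI : Nontrivial ↥K := (Subgroup.nontrivial_iff_ne_bot K).mpr hKbot
          have hd : ∀ m, derivedSeries ↥K m = ⊤ := by
            intro m
            induction m with
            | zero => exact derivedSeries_zero ↥K
            | succ m ihm => rw [derivedSeries_succ, ihm, h2]
          obtain ⟨m, hm⟩ := hsol
          rw [hd m] at hm
          obtain ⟨x, hx1⟩ := exists_ne (1 : ↥K)
          exact hx1 (Subgroup.mem_bot.mp (hm ▸ Subgroup.mem_top x))
        have hcommbot : ⁅K, K⁆ = ⊥ := by
          by_contra h
          exact hKK (hKmin _ ⟨inferInstance, h, hcomm_le⟩ hcomm_le)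
        have hKab : ∀ x ∈ K, ∀ y ∈ K, x * y = y * x := by
          intro x hx y hy
          have hm := Subgroup.commutator_mem_commutator hx hy
          rw [hcommbot, Subgroup.mem_bot] at hm
          exact (commutatorElement_eq_one_iff_commute.mp hm).eq
        set C := Subgroup.centralizer (K : Set G) with hC
        have hCK : C ≤ K := by
          intro c hc
          obtain ⟨k, hkK, hk⟩ := htr ω₀ (c • ω₀)
          have h1 : k⁻¹ * c = 1 := by
            apply hfaith
            intro b
            obtain ⟨k', hk'K, rfl⟩ := htr ω₀ b
            have hck' : k' * c = c * k' := Subgroup.mem_centralizer_iff.mp hc k' hk'K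
            have hkk' : k⁻¹ * k' = k' * k⁻¹ :=
              hKab k⁻¹ (K.inv_mem hkK) k' hk'K
            calc (k⁻¹ * c) • k' • ω₀ = (k⁻¹ * c * k') • ω₀ := by rw [← mul_smul]
              _ = (k⁻¹ * k' * c) • ω₀ := by rw [mul_assoc, ← hck', ← mul_assoc]
              _ = (k' * (k⁻¹ * c)) • ω₀ := by rw [hkk', mul_assoc]
              _ = k' • (k⁻¹ • c • ω₀) := by rw [mul_smul, mul_smul]
              _ = k' • (k⁻¹ • k • ω₀) := by rw [hk]
              _ = k' • ω₀ := by rw [inv_smul_smul]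
          have : c = k := by
            have h2 := inv_mul_eq_one.mp h1
            rw [h2]
          rw [this]
          exact hkK
        have hNKn : (N ⊓ K).Normal := by
          constructor
          intro x hx g
          have hx' := Subgroup.mem_inf.mp hx
          exact Subgroup.mem_inf.mpr ⟨hNn.conj_mem x hx'.1 g, hKn.conj_mem x hx'.2 g⟩
        rcases eq_or_ne (N ⊓ K) ⊥ with hNK | hNK
        · intro x hx
          apply hCK
          rw [Subgroup.mem_centralizer_iff]
          intro y hy
          have hinN : x * y * x⁻¹ * y⁻¹ ∈ N := by
            have h2 : y * x⁻¹ * y⁻¹ ∈ N := by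
              have := hNn.conj_mem x⁻¹ (N.inv_mem hx) y
              simpa [mul_assoc] using this
            have := N.mul_mem hx h2
            simpa [mul_assoc] using this
          have hinK : x * y * x⁻¹ * y⁻¹ ∈ K := by
            have h2 : x * y * x⁻¹ ∈ K := hKn.conj_mem y hy x
            exact K.mul_mem h2 (K.inv_mem hy)
          have hm : x * y * x⁻¹ * y⁻¹ ∈ N ⊓ K := Subgroup.mem_inf.mpr ⟨hinN, hinK⟩
          rw [hNK, Subgroup.mem_bot] at hm
          have := (commutatorElement_eq_one_iff_commute.mp hm).eq
          exact this.symm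
        · have hNKK : N ⊓ K = K := hKmin _ ⟨hNKn, hNK, inf_le_right⟩ inf_le_right
          have hKleN : K ≤ N := inf_eq_right.mp hNKK
          haveI : Nontrivial ↥N := (Subgroup.nontrivial_iff_ne_bot N).mpr
            (fun h => hKbot (le_bot_iff.mp (h ▸ hKleN)))
          haveI := hNnil
          obtain ⟨z, hz1, hzc⟩ := aux_exists_central (H := ↥N)
          set Z := Subgroup.centralizer (N : Set G) ⊓ N with hZ
          have hZn : Z.Normal := by
            constructor
            intro x hx g
            have hx' := Subgroup.mem_inf.mp hx
            refine Subgroup.mem_inf.mpr ⟨?_, hNn.conj_mem x hx'.2 g⟩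
            rw [Subgroup.mem_centralizer_iff]
            intro y hy
            have hy' : g⁻¹ * y * g ∈ N := by
              have := hNn.conj_mem y hy g⁻¹
              simpa [mul_assoc] using this
            have hcomm : (g⁻¹ * y * g) * x = x * (g⁻¹ * y * g) :=
              Subgroup.mem_centralizer_iff.mp hx'.1 _ hy'
            have := congrArg (fun t => g * t * g⁻¹) hcomm
            simpa [mul_assoc] using this
          have hZK : Z ≤ K := by
            refine le_trans (le_trans inf_le_left ?_) hCK
            exact Subgroup.centralizer_le (SetLike.coe_subset_coe.mpr hKleN)
          have hZbot : Z ≠ ⊥ := by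
            intro h
            apply hz1
            have hzZ : (z : G) ∈ Z := by
              refine Subgroup.mem_inf.mpr ⟨?_, SetLike.coe_mem z⟩
              rw [Subgroup.mem_centralizer_iff]
              intro y hy
              have := hzc ⟨y, hy⟩
              exact congrArg Subtype.val this
            rw [h, Subgroup.mem_bot] at hzZ
            exact Subtype.ext hzZ
          have hZKe : Z = K := hKmin Z ⟨hZn, hZbot, hZK⟩ hZK
          intro x hx
          apply hCK
          rw [Subgroup.mem_centralizer_iff]
          intro y hy
          have hyZ : y ∈ Z := hZKe ▸ hy
          exact (Subgroup.mem_centralizer_iff.mp (Subgroup.mem_inf.mp hyZ).1 x hx).symm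

end Part1

section Part2Aux

open Subgroup

private lemma aux_sSup_inv {H : Type*} [Group H] (S : Set (Subgroup H)) (φ : H ≃* H)
    (hS : ∀ P ∈ S, Subgroup.map φ.toMonoidHom P ∈ S) :
    ∀ x ∈ sSup S, φ x ∈ sSup S := by
  have h1 : sSup S ≤ Subgroup.comap φ.toMonoidHom (sSup S) := by
    apply sSup_le
    intro P hP
    exact le_trans ((Subgroup.gc_map_comap φ.toMonoidHom).le_u_l P)
      (Subgroup.comap_mono (le_sSup (hS P hP)))
  intro x hx
  exact h1 hx

private lemma aux_map_conj_eq {H : Type*} [Group H] {P : Subgroup H} (hP : P.Normal) (g : H) :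
    Subgroup.map (MulAut.conj g).toMonoidHom P = P := by
  ext y
  constructor
  · rintro ⟨p, hp, rfl⟩
    exact hP.conj_mem p hp g
  · intro hy
    refine ⟨g⁻¹ * y * g, by simpa using hP.conj_mem y hy g⁻¹, ?_⟩
    show g * (g⁻¹ * y * g) * g⁻¹ = y
    group

private lemma aux_sSup_normal {H : Type*} [Group H] (S : Set (Subgroup H))
    (hS : ∀ P ∈ S, P.Normal) : (sSup S).Normal := by
  constructor
  intro x hx g
  have hmap : ∀ P ∈ S, Subgroup.map (MulAut.conj g).toMonoidHom P ∈ S := by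
    intro P hP
    rw [aux_map_conj_eq (hS P hP) g]
    exact hP
  exact aux_sSup_inv S (MulAut.conj g) hmap x hx

private lemma aux_sSup_pgroup {H : Type*} [Group H] [Finite H] (p : ℕ)
    (S : Set (Subgroup H)) (hS : ∀ P ∈ S, P.Normal ∧ IsPGroup p ↥P) :
    IsPGroup p ↥(sSup S) := by
  haveI : Finite (Subgroup H) :=
    Finite.of_injective (fun B : Subgroup H => (B : Set H)) SetLike.coe_injective
  have key : ∀ s : Set (Subgroup H), s.Finite → s ⊆ S → IsPGroup p ↥(sSup s) := by
    intro s hfin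
    refine Set.Finite.induction_on s hfin ?_ ?_
    · intro _
      rw [sSup_empty]
      intro q
      exact ⟨0, by simpa [pow_zero] using (Subgroup.mem_bot.mp q.2 : (q : H) = 1)⟩
    · intro a s' ha hsfin ihs hsub
      rw [sSup_insert]
      haveI : (sSup s').Normal := aux_sSup_normal s'
        (fun P hP => (hS P (hsub (Set.mem_insert_of_mem a hP))).1)
      exact IsPGroup.to_sup_of_normal_right
        (hS a (hsub (Set.mem_insert a s'))).2 (ihs (fun P hP => hsub (Set.mem_insert_of_mem a hP)))
  exact key S (Set.toFinite S) le_rfl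

private lemma aux_decomp {H : Type*} [Group H] [Finite H] (Hsub D : Subgroup H)
    (hD : ∀ p : ℕ, p.Prime → ∀ x ∈ Hsub, (∃ k, orderOf x = p ^ k) → x ∈ D) : Hsub ≤ D := by
  have key : ∀ n : ℕ, ∀ x ∈ Hsub, orderOf x = n → x ∈ D := by
    intro n
    induction n using Nat.strong_induction_on with
    | _ n ihn =>
      intro x hx hord
      rcases eq_or_ne n 1 with h1 | h1
      · have hx1 : x = 1 := orderOf_eq_one_iff.mp (by rw [hord, h1])
        rw [hx1]; exact D.one_mem
      · have hn0 : n ≠ 0 := by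
          have := orderOf_pos x
          omega
        set p := n.minFac with hpdef
        have hp : p.Prime := Nat.minFac_prime h1
        set k := n.factorization p with hkdef
        set m := n / p ^ k with hmdef
        have hdvd : p ^ k ∣ n := Nat.ordProj_dvd n p
        have hm : p ^ k * m = n := Nat.ordProj_mul_ordCompl_eq_self n p
        have hcop : Nat.Coprime (p ^ k) m :=
          (Nat.coprime_ordCompl hp hn0).pow_left k
        have hb : ∃ u v : ℤ, ((p ^ k : ℕ) : ℤ) * u + ((m : ℕ) : ℤ) * v = 1 := by
          have hgab := Int.gcd_eq_gcd_ab ((p ^ k : ℕ) : ℤ) ((m : ℕ) : ℤ)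
          have hg : Int.gcd ((p ^ k : ℕ) : ℤ) ((m : ℕ) : ℤ) = 1 := by
            rw [Int.gcd_natCast_natCast]
            exact hcop
          refine ⟨Int.gcdA ((p ^ k : ℕ) : ℤ) ((m : ℕ) : ℤ), Int.gcdB ((p ^ k : ℕ) : ℤ) ((m : ℕ) : ℤ), ?_⟩
          rw [← hgab, hg]
          norm_num
        obtain ⟨u, v, huv⟩ := hb
        set y := x ^ (((m : ℕ) : ℤ) * v) with hydef
        set z := x ^ (((p ^ k : ℕ) : ℤ) * u) with hzdef
        have hzy : z * y = x := by
          rw [hydef, hzdef, ← zpow_add, huv, zpow_one]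
        have hyH : y ∈ Hsub := Hsub.zpow_mem hx _
        have hzH : z ∈ Hsub := Hsub.zpow_mem hx _
        have hyD : y ∈ D := by
          apply hD p hp y hyH
          have h2 : y ^ (p ^ k) = 1 := by
            rw [hydef, ← zpow_natCast, ← zpow_mul]
            have he : ((m : ℕ) : ℤ) * v * ((p ^ k : ℕ) : ℤ) = (n : ℤ) * v := by
              rw [← hm]; push_cast; ring
            rw [he, zpow_mul, zpow_natCast, ← hord, pow_orderOf_eq_one, one_zpow]
          have h3 : orderOf y ∣ p ^ k := orderOf_dvd_of_pow_eq_one h2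
          obtain ⟨j, _, hje⟩ := (Nat.dvd_prime_pow hp).mp h3
          exact ⟨j, hje⟩
        have hzD : z ∈ D := by
          have h2 : z ^ m = 1 := by
            rw [hzdef, ← zpow_natCast, ← zpow_mul]
            have he : ((p ^ k : ℕ) : ℤ) * u * ((m : ℕ) : ℤ) = (n : ℤ) * u := by
              rw [← hm]; push_cast; ring
            rw [he, zpow_mul, zpow_natCast, ← hord, pow_orderOf_eq_one, one_zpow]
          have h3 : orderOf z ∣ m := orderOf_dvd_of_pow_eq_one h2
          have hpk1 : 1 < p ^ k := by
            have hkpos : 0 < k := hp.factorization_pos_of_dvd hn0 (Nat.minFac_dvd n)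
            exact Nat.one_lt_pow (by omega : k ≠ 0) hp.one_lt
          have hmpos : 0 < m := Nat.div_pos (Nat.le_of_dvd (Nat.pos_of_ne_zero hn0) hdvd)
            (by positivity)
          have hmlt : m < n := Nat.div_lt_self (Nat.pos_of_ne_zero hn0) hpk1
          exact ihn (orderOf z) (lt_of_le_of_lt (Nat.le_of_dvd hmpos h3) hmlt) z hzH rfl
        rw [← hzy]
        exact D.mul_mem hzD hyD
  intro x hx
  exact key (orderOf x) x hx rfl

private def conjEquiv {G : Type*} [Group G] {K : Subgroup G} (hK : K.Normal) (g : G) :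
    ↥K ≃* ↥K where
  toFun n := ⟨g * n * g⁻¹, hK.conj_mem n n.2 g⟩
  invFun n := ⟨g⁻¹ * n * g, by simpa using hK.conj_mem n n.2 g⁻¹⟩
  left_inv n := by ext; simp [mul_assoc]
  right_inv n := by ext; simp [mul_assoc]
  map_mul' a b := by ext; simp [mul_assoc]

private lemma aux_p_elt_in_normal_pgroup {K : Type*} [Group K] [Finite K] (N : Subgroup K)
    (hN : N.Normal) (hnil : Group.IsNilpotent ↥N) (p : ℕ) (hp : p.Prime) (x : K) (hx : x ∈ N)
    (hord : ∃ k, orderOf x = p ^ k) :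
    ∃ P : Subgroup K, P.Normal ∧ IsPGroup p ↥P ∧ x ∈ P := by
  haveI : Fact p.Prime := ⟨hp⟩
  set x' : ↥N := ⟨x, hx⟩ with hx'def
  have hxp : IsPGroup p ↥(Subgroup.zpowers x') := by
    obtain ⟨k, hk⟩ := hord
    apply IsPGroup.of_card (n := k)
    rw [Nat.card_zpowers]
    rw [← hk]
    exact (orderOf_injective N.subtype (Subgroup.subtype_injective N) x').symm
  obtain ⟨P, hP⟩ := hxp.exists_le_sylow
  haveI : Finite (Sylow p ↥N) :=
    Finite.of_injective (fun Q : Sylow p ↥N => (Q : Subgroup ↥N))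
      (fun _ _ h => Sylow.ext h)
  have hPnorm : (P : Subgroup ↥N).Normal := by
    haveI := hnil
    have h04 := List.TFAE.out (isNilpotent_of_finite_tfae (G := ↥N)) 0 3
    exact h04.mp hnil p ⟨hp⟩ P
  haveI hPn' := hPnorm
  haveI hu : Unique (Sylow p ↥N) := Sylow.unique_of_normal P hPnorm
  refine ⟨Subgroup.map N.subtype ↑P, ?_, IsPGroup.map P.isPGroup' N.subtype,
    Subgroup.mem_map.mpr ⟨x', hP (Subgroup.mem_zpowers x'), rfl⟩⟩
  constructor
  intro u hu2 k
  obtain ⟨v, hv, rfl⟩ := Subgroup.mem_map.mp hu2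
  set ψ : ↥N ≃* ↥N := conjEquiv hN k with hψdef
  have hψP : Subgroup.map ψ.toMonoidHom (↑P : Subgroup ↥N) ≤ ↑P := by
    obtain ⟨Q, hQ⟩ := (IsPGroup.map P.isPGroup' ψ.toMonoidHom).exists_le_sylow
    have hQP : Q = P := Subsingleton.elim Q P
    rw [hQP] at hQ
    exact hQ
  have hv' : ψ v ∈ (↑P : Subgroup ↥N) := hψP (Subgroup.mem_map.mpr ⟨v, hv, rfl⟩)
  exact Subgroup.mem_map.mpr ⟨ψ v, hv', rfl⟩

end Part2Aux

/-- Lemma 2.5: if `G` is a finite semiprimitive group with a soluble regular normal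
subgroup `K`, then every nilpotent normal subgroup of `G` is contained in `K`; in
particular the Fitting subgroup of `G` (the join of all nilpotent normal subgroups)
equals the Fitting subgroup of `K`. -/
theorem stmt5 {G Ω : Type*} [Group G] [Finite G] [MulAction G Ω] [FaithfulSMul G Ω]
    (hsp : IsSemiprimitiveAction G Ω) (K : Subgroup G) [K.Normal]
    (hsol : IsSolvable K) (htrans : K.IsTransitiveOn Ω) (hsreg : K.IsSemiregularOn Ω) :
    (∀ N : Subgroup G, N.Normal → Group.IsNilpotent N → N ≤ K) ∧
    sSup {N : Subgroup G | N.Normal ∧ Group.IsNilpotent N} =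
      Subgroup.map K.subtype (sSup {N : Subgroup K | N.Normal ∧ Group.IsNilpotent N}) := by
  have hKn : K.Normal := inferInstance
  have hpart1 : ∀ N : Subgroup G, N.Normal → Group.IsNilpotent N → N ≤ K :=
    fun N h1 h2 => part1 (Nat.card G) le_rfl hsp K hKn hsol htrans hsreg N h1 h2
  refine ⟨hpart1, le_antisymm ?_ ?_⟩
  · apply sSup_le
    rintro N ⟨h1, h2⟩
    have hNK := hpart1 N h1 h2
    have hsub_n : (N.subgroupOf K).Normal := by
      constructor
      intro x hx k
      rw [Subgroup.mem_subgroupOf] at hx ⊢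
      simpa using h1.conj_mem _ hx (k : G)
    have hsub_nil : Group.IsNilpotent ↥(N.subgroupOf K) :=
      nilpotent_of_mulEquiv (Subgroup.subgroupOfEquivOfLe hNK).symm
    have hmem : N.subgroupOf K ∈ {M : Subgroup ↥K | M.Normal ∧ Group.IsNilpotent ↥M} :=
      ⟨hsub_n, hsub_nil⟩
    have heq : N = Subgroup.map K.subtype (N.subgroupOf K) := by
      rw [Subgroup.subgroupOf_map_subtype, inf_eq_left.mpr hNK]
    rw [heq]
    exact Subgroup.map_mono (le_sSup hmem)
  · rw [Subgroup.map_le_iff_le_comap]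
    apply sSup_le
    rintro M ⟨hMn, hMnil⟩
    have hmap_le : Subgroup.map K.subtype M
        ≤ sSup {N : Subgroup G | N.Normal ∧ Group.IsNilpotent N} := by
      apply aux_decomp
      intro p hp y hy hord
      obtain ⟨x, hxM, rfl⟩ := Subgroup.mem_map.mp hy
      have hordx : ∃ k, orderOf x = p ^ k := by
        obtain ⟨k, hk⟩ := hord
        refine ⟨k, ?_⟩
        rw [← orderOf_injective K.subtype (Subgroup.subtype_injective K) x]
        exact hk
      obtain ⟨P, hPn, hPp, hxP⟩ := aux_p_elt_in_normal_pgroup M hMn hMnil p hp x hxM hordx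
      set T : Set (Subgroup ↥K) := {Q : Subgroup ↥K | Q.Normal ∧ IsPGroup p ↥Q} with hT
      have hOp_p : IsPGroup p ↥(sSup T) := aux_sSup_pgroup p T (fun Q hQ => hQ)
      have hmem_img : Subgroup.map K.subtype (sSup T)
          ∈ {N : Subgroup G | N.Normal ∧ Group.IsNilpotent N} := by
        refine ⟨?_, ?_⟩
        · constructor
          intro u hu g
          obtain ⟨w, hw, rfl⟩ := Subgroup.mem_map.mp hu
          set ψ : ↥K ≃* ↥K := conjEquiv hKn g with hψdef
          have hT_inv : ∀ Q ∈ T, Subgroup.map ψ.toMonoidHom Q ∈ T := by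
            intro Q hQ
            exact ⟨hQ.1.map ψ.toMonoidHom ψ.surjective, IsPGroup.map hQ.2 ψ.toMonoidHom⟩
          have hmem2 := aux_sSup_inv T ψ hT_inv w hw
          exact Subgroup.mem_map.mpr ⟨ψ w, hmem2, rfl⟩
        · haveI : Fact p.Prime := ⟨hp⟩
          exact (IsPGroup.map hOp_p K.subtype).isNilpotent
      have hxin : K.subtype x ∈ Subgroup.map K.subtype (sSup T) :=
        Subgroup.mem_map.mpr ⟨x, le_sSup (show P ∈ T from ⟨hPn, hPp⟩) hxP, rfl⟩
      exact le_sSup hmem_img hxin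
    intro x hx
    rw [Subgroup.mem_comap]
    exact hmap_le (Subgroup.mem_map.mpr ⟨x, hx, rfl⟩)
end

section
/- Let Γ be a connected graph, G ≤ Aut(Γ), and let {x,y} be an edge of Γ. Suppose K ≤ G_x ∩ G_y is a subgroup such that the image of N_{G_x}(K) in Sym(Γ(x)) is transitive on Γ(x) and the image of N_{G_y}(K) in Sym(Γ(y)) is transitive on Γ(y). Then K = 1. -/
/-- Lemma 3.2(a): let `Γ` be a finite connected graph, `G ≤ Aut Γ`, `{x,y}` an edge and
`K ≤ G_x ∩ G_y`. If the images of `N_{G_x}(K)` and `N_{G_y}(K)` on `Γ(x)` resp. `Γ(y)`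
are transitive, then `K = 1`. -/
theorem stmt8 {G V : Type*} [Group G] [Finite V] [MulAction G V] [FaithfulSMul G V]
    (Γ : SimpleGraph V) (hconn : Γ.Connected)
    (hact : ∀ (g : G) (u v : V), Γ.Adj u v → Γ.Adj (g • u) (g • v))
    (x y : V) (hxy : Γ.Adj x y)
    (K : Subgroup G)
    (hK : K ≤ MulAction.stabilizer G x ⊓ MulAction.stabilizer G y)
    (hx : ∀ u v : V, Γ.Adj x u → Γ.Adj x v →
      ∃ g ∈ MulAction.stabilizer G x ⊓ Subgroup.normalizer (K : Set G), g • u = v)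
    (hy : ∀ u v : V, Γ.Adj y u → Γ.Adj y v →
      ∃ g ∈ MulAction.stabilizer G y ⊓ Subgroup.normalizer (K : Set G), g • u = v) :
    K = ⊥ := by
  -- the property: K fixes v, and N_{G_v}(K) is transitive on Γ(v)
  set P : V → Prop := fun v =>
    (∀ k ∈ K, k • v = v) ∧
    ∀ a b, Γ.Adj v a → Γ.Adj v b →
      ∃ g ∈ MulAction.stabilizer G v ⊓ Subgroup.normalizer (K : Set G), g • a = b with hP
  -- conjugation transports P
  have conjP : ∀ g ∈ Subgroup.normalizer (K : Set G), ∀ v, P v → P (g • v) := by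
    intro g hg v hv
    constructor
    · intro k hk
      have hk' : g⁻¹ * k * g ∈ K := by
        have := (Subgroup.mem_normalizer_iff.mp ((Subgroup.normalizer (K : Set G)).inv_mem hg)) k
        simpa using this.mp hk
      have := hv.1 _ hk'
      calc k • g • v = g • ((g⁻¹ * k * g) • v) := by
            simp [mul_smul]
        _ = g • v := by rw [this]
    · intro a b ha hb
      have ha' : Γ.Adj v (g⁻¹ • a) := by
        have := hact g⁻¹ _ _ ha
        simpa using this
      have hb' : Γ.Adj v (g⁻¹ • b) := by
        have := hact g⁻¹ _ _ hb
        simpa using this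
      obtain ⟨h, ⟨hstab, hnorm⟩, hab⟩ := hv.2 _ _ ha' hb'
      refine ⟨g * h * g⁻¹, ⟨?_, ?_⟩, ?_⟩
      · show (g * h * g⁻¹) • (g • v) = g • v
        have : h • v = v := hstab
        simp [mul_smul, this]
      · exact mul_mem (mul_mem hg hnorm) ((Subgroup.normalizer (K : Set G)).inv_mem hg)
      · have : h • (g⁻¹ • a) = g⁻¹ • b := hab
        calc (g * h * g⁻¹) • a = g • (h • (g⁻¹ • a)) := by simp [mul_smul]
          _ = g • (g⁻¹ • b) := by rw [this]
          _ = b := by simp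
  have Px : P x := ⟨fun k hk => (hK hk).1, hx⟩
  have Py : P y := ⟨fun k hk => (hK hk).2, hy⟩
  -- the combined invariant
  set C : V → Prop := fun v => P v ∧ ∀ w, Γ.Adj v w → P w with hC
  have Cx : C x := by
    refine ⟨Px, fun w hw => ?_⟩
    obtain ⟨g, ⟨hgx, hgn⟩, hgyw⟩ := hx y w hxy hw
    have := conjP g hgn y Py
    rwa [hgyw] at this
  have step : ∀ u v, Γ.Adj u v → C u → C v := by
    intro u v huv hu
    have Pv : P v := hu.2 v huv
    refine ⟨Pv, fun w hw => ?_⟩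
    obtain ⟨g, ⟨hgv, hgn⟩, hguw⟩ := Pv.2 u w huv.symm hw
    have := conjP g hgn u hu.1
    rwa [hguw] at this
  have walkC : ∀ (u v : V) (_ : Γ.Walk u v), C u → C v := by
    intro u v p
    induction p with
    | nil => exact id
    | cons h p ih => intro hu; exact ih (step _ _ h hu)
  have allC : ∀ v, C v := fun v => walkC x v (hconn x v).some Cx
  rw [eq_bot_iff]
  intro k hk
  have : ∀ v : V, k • v = (1 : G) • v := by
    intro v
    simpa using (allC v).1.1 k hk
  simpa using FaithfulSMul.eq_of_smul_eq_smul this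
end

section
/- Let V be a finite-dimensional vector space over a finite field F_{q^a} with q prime, H = GL(V), and W = V ⊕ ... ⊕ V (m copies) with H acting diagonally. Then K = W ⋊ H acting on Ω = W (with W acting by translations and H linearly) is semiprimitive: every normal subgroup of K is transitive or semiregular on W. -/
theorem exists_linearEquiv_map_eq (F : Type*) [Field F]
    (V : Type*) [AddCommGroup V] [Module F V] [FiniteDimensional F V]
    (x y : V) (hx : x ≠ 0) (hy : y ≠ 0) : ∃ g : V ≃ₗ[F] V, g x = y := by
  obtain ⟨C, hC⟩ := Submodule.exists_isCompl (F ∙ x)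
  obtain ⟨C', hC'⟩ := Submodule.exists_isCompl (F ∙ y)
  have hdim : Module.finrank F C = Module.finrank F C' := by
    have h1 := Submodule.finrank_add_eq_of_isCompl hC
    have h2 := Submodule.finrank_add_eq_of_isCompl hC'
    have hx1 : Module.finrank F (F ∙ x) = 1 := finrank_span_singleton hx
    have hy1 : Module.finrank F (F ∙ y) = 1 := finrank_span_singleton hy
    omega
  obtain ⟨e2⟩ : Nonempty ((C : Submodule F V) ≃ₗ[F] (C' : Submodule F V)) :=
    ⟨LinearEquiv.ofFinrankEq _ _ hdim⟩
  obtain ⟨e1, he1⟩ : ∃ e1 : (F ∙ x) ≃ₗ[F] (F ∙ y),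
      e1 ⟨x, Submodule.mem_span_singleton_self x⟩ = ⟨y, Submodule.mem_span_singleton_self y⟩ := by
    refine ⟨(LinearEquiv.toSpanNonzeroSingleton F V x hx).symm.trans
      (LinearEquiv.toSpanNonzeroSingleton F V y hy), ?_⟩
    rw [LinearEquiv.trans_apply, ← LinearEquiv.toSpanNonzeroSingleton_one F V x hx,
      LinearEquiv.symm_apply_apply, LinearEquiv.toSpanNonzeroSingleton_one F V y hy]
  refine ⟨((Submodule.prodEquivOfIsCompl _ _ hC).symm.trans
      ((LinearEquiv.prodCongr e1 e2).trans (Submodule.prodEquivOfIsCompl _ _ hC'))), ?_⟩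
  have hx' : ((Submodule.prodEquivOfIsCompl _ _ hC).symm x) =
      (⟨x, Submodule.mem_span_singleton_self x⟩, 0) := by
    apply (Submodule.prodEquivOfIsCompl _ _ hC).injective
    simp [Submodule.coe_prodEquivOfIsCompl', Submodule.projection_add_projection_eq_self]
  simp only [LinearEquiv.trans_apply, hx', LinearEquiv.prodCongr_apply, Prod.map, he1]
  simp [Submodule.coe_prodEquivOfIsCompl']


/-- Example: let `V` be a finite-dimensional vector space over a finite field `F`, and
`W = V ⊕ ⋯ ⊕ V` (`m` copies). Let `K = W ⋊ GL(V)` act on `Ω = W`, with `W` acting by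
translations and `GL(V)` acting diagonally: realised as the subgroup `G` of `Perm W`
generated by the translations and the diagonal linear maps. Then `K` is semiprimitive on
`W`: every normal subgroup of `G` is transitive or semiregular on `W`. -/
theorem stmt14 (F : Type*) [Field F] [Finite F]
    (V : Type*) [AddCommGroup V] [Module F V] [FiniteDimensional F V] (m : ℕ)
    (G : Subgroup (Equiv.Perm (Fin m → V)))
    (hG : G = Subgroup.closure
      ({σ : Equiv.Perm (Fin m → V) | ∃ w : Fin m → V, σ = Equiv.addLeft w} ∪
       {σ : Equiv.Perm (Fin m → V) | ∃ g : V ≃ₗ[F] V, ∀ w i, σ w i = g (w i)})) :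
    ∀ N : Subgroup (Equiv.Perm (Fin m → V)), N ≤ G →
      (∀ g ∈ G, ∀ n ∈ N, g * n * g⁻¹ ∈ N) →
      (∀ a b : Fin m → V, ∃ n ∈ N, n a = b) ∨
      (∀ n ∈ N, ∀ a : Fin m → V, n a = a → n = 1) := by
  intro N hNG hnorm
  -- generators are in G
  have hTG : ∀ w : Fin m → V, Equiv.addLeft w ∈ G := by
    intro w; rw [hG]; exact Subgroup.subset_closure (Or.inl ⟨w, rfl⟩)
  set dP : (V ≃ₗ[F] V) → Equiv.Perm (Fin m → V) :=
    fun h => Equiv.arrowCongr (Equiv.refl (Fin m)) h.toEquiv with hdP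
  have hdP_apply : ∀ (h : V ≃ₗ[F] V) (w : Fin m → V) (i : Fin m), dP h w i = h (w i) := by
    intro h w i; simp [hdP, Equiv.arrowCongr]
  have hDG : ∀ h : V ≃ₗ[F] V, dP h ∈ G := by
    intro h; rw [hG]
    exact Subgroup.subset_closure (Or.inr ⟨h, fun w i => hdP_apply h w i⟩)
  by_cases hsr : ∀ n ∈ N, ∀ a : Fin m → V, n a = a → n = 1
  · exact Or.inr hsr
  left
  push_neg at hsr
  obtain ⟨n, hnN, a0, hna0, hn1⟩ := hsr
  -- every element of G is affine
  let A : Subgroup (Equiv.Perm (Fin m → V)) :=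
    { carrier := {σ | ∃ (g : V ≃ₗ[F] V) (t : Fin m → V), ∀ w i, σ w i = g (w i) + t i}
      one_mem' := ⟨LinearEquiv.refl F V, 0, by simp⟩
      mul_mem' := by
        rintro σ τ ⟨g1, t1, h1⟩ ⟨g2, t2, h2⟩
        refine ⟨g2.trans g1, fun i => g1 (t2 i) + t1 i, fun w i => ?_⟩
        simp only [Equiv.Perm.mul_apply, h1, h2, LinearEquiv.trans_apply, map_add]
        abel
      inv_mem' := by
        rintro σ ⟨g, t, h⟩
        refine ⟨g.symm, fun i => -(g.symm (t i)), fun w i => ?_⟩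
        have h1 := h (σ⁻¹ w) i
        simp only [Equiv.Perm.coe_inv, Equiv.apply_symm_apply] at h1
        have h2 : g ((σ⁻¹ w) i) = w i - t i := eq_sub_iff_add_eq.mpr h1.symm
        calc (σ⁻¹ w) i = g.symm (g ((σ⁻¹ w) i)) := (g.symm_apply_apply _).symm
          _ = g.symm (w i) + -(g.symm (t i)) := by rw [h2, map_sub]; abel }
  have hGA : G ≤ A := by
    rw [hG]
    apply (Subgroup.closure_le A).2
    rintro σ (⟨w, rfl⟩ | ⟨h, hh⟩)
    · exact ⟨LinearEquiv.refl F V, w, fun w' i => by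
        simp [Equiv.coe_addLeft, add_comm]⟩
    · exact ⟨h, 0, fun w i => by simp [hh w i]⟩
  obtain ⟨g, t, hgt⟩ := hGA (hNG hnN)
  have hgt' : ∀ (w : Fin m → V) (i : Fin m), (n⁻¹ w) i = g.symm (w i) - g.symm (t i) := by
    intro w i
    have h1 := hgt (n⁻¹ w) i
    simp only [Equiv.Perm.coe_inv, Equiv.apply_symm_apply] at h1
    have h2 : g ((n⁻¹ w) i) = w i - t i := eq_sub_iff_add_eq.mpr h1.symm
    calc (n⁻¹ w) i = g.symm (g ((n⁻¹ w) i)) := (g.symm_apply_apply _).symm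
      _ = g.symm (w i) - g.symm (t i) := by rw [h2, map_sub]
  have hfix : ∀ i, g (a0 i) + t i = a0 i := by
    intro i; rw [← hgt a0 i, hna0]
  -- g is not the identity
  obtain ⟨v, hv⟩ : ∃ v, g v ≠ v := by
    by_contra hall
    push_neg at hall
    apply hn1
    apply Equiv.ext
    intro w
    funext i
    have ht0 : t i = 0 := by have := hfix i; rw [hall] at this; exact add_left_cancel (by rw [add_zero]; exact this)
    rw [hgt w i, hall, ht0, add_zero]
    rfl
  -- commutators give translations in N
  have hcomm : ∀ w : Fin m → V, Equiv.addLeft (fun i => g (w i) - w i) ∈ N := by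
    intro w
    have h1 : Equiv.addLeft w * n⁻¹ * (Equiv.addLeft w)⁻¹ ∈ N :=
      hnorm _ (hTG w) _ (N.inv_mem hnN)
    have h2 : n * (Equiv.addLeft w * n⁻¹ * (Equiv.addLeft w)⁻¹) ∈ N := N.mul_mem hnN h1
    have heq : Equiv.addLeft (fun i => g (w i) - w i) =
        n * (Equiv.addLeft w * n⁻¹ * (Equiv.addLeft w)⁻¹) := by
      apply Equiv.ext
      intro x
      funext i
      have hx' : ((Equiv.addLeft w)⁻¹ x) = -w + x := by
        simp [Equiv.Perm.inv_def, Equiv.addLeft_symm]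
      simp only [Equiv.Perm.mul_apply, hx', Equiv.coe_addLeft, Pi.add_apply]
      rw [hgt]
      simp only [Pi.add_apply, hgt', Pi.neg_apply, Pi.add_apply]
      rw [map_add, map_sub]
      simp only [LinearEquiv.apply_symm_apply]
      abel
    rw [heq]; exact h2
  -- conjugation by diagonal maps
  have hdiagconj : ∀ (h : V ≃ₗ[F] V) (u : Fin m → V), Equiv.addLeft u ∈ N →
      Equiv.addLeft (fun i => h (u i)) ∈ N := by
    intro h u hu
    have h1 : dP h * Equiv.addLeft u * (dP h)⁻¹ ∈ N := hnorm _ (hDG h) _ hu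
    have heq : Equiv.addLeft (fun i => h (u i)) = dP h * Equiv.addLeft u * (dP h)⁻¹ := by
      apply Equiv.ext
      intro x
      funext i
      have hinv : ∀ z : Fin m → V, ((dP h)⁻¹ z) i = h.symm (z i) := by
        intro z
        simp [hdP, Equiv.Perm.inv_def, Equiv.arrowCongr]
      simp only [Equiv.Perm.mul_apply, Equiv.coe_addLeft, Pi.add_apply, hdP_apply, hinv,
        map_add, LinearEquiv.apply_symm_apply]
    rw [heq]; exact h1
  -- translations in N form an additive subgroup
  let T : AddSubgroup (Fin m → V) :=
    { carrier := {u | Equiv.addLeft u ∈ N}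
      zero_mem' := by
        have : Equiv.addLeft (0 : Fin m → V) = 1 := Equiv.ext fun x => zero_add x
        simp only [Set.mem_setOf_eq, this]; exact N.one_mem
      add_mem' := by
        intro u v hu hv
        have : Equiv.addLeft (u + v) = Equiv.addLeft u * Equiv.addLeft v :=
          Equiv.ext fun x => add_assoc u v x
        simp only [Set.mem_setOf_eq, this]; exact N.mul_mem hu hv
      neg_mem' := by
        intro u hu
        have : Equiv.addLeft (-u) = (Equiv.addLeft u)⁻¹ := by
          apply Equiv.ext; intro x
          simp [Equiv.Perm.inv_def, Equiv.addLeft_symm]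
        simp only [Set.mem_setOf_eq, this]; exact N.inv_mem hu }
  have hx0 : g v - v ≠ 0 := sub_ne_zero.mpr hv
  have hT : ∀ (i : Fin m) (y : V), (Pi.single i y : Fin m → V) ∈ T := by
    intro i y
    by_cases hy : y = 0
    · subst hy; rw [Pi.single_zero]; exact T.zero_mem
    obtain ⟨h, hh⟩ := exists_linearEquiv_map_eq F V (g v - v) y hx0 hy
    have h1 := hcomm (Pi.single i v)
    have h2 := hdiagconj h _ h1
    have heq : (fun j => h (g ((Pi.single i v : Fin m → V) j) - (Pi.single i v : Fin m → V) j)) = (Pi.single i y : Fin m → V) := by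
      funext j
      by_cases hj : j = i
      · subst hj; simp only [Pi.single_eq_same, hh]
      · rw [Pi.single_eq_of_ne hj, Pi.single_eq_of_ne hj]; simp
    rw [heq] at h2
    exact h2
  intro a b
  refine ⟨Equiv.addLeft (b - a), ?_, by simp⟩
  have : (b - a : Fin m → V) = ∑ i, Pi.single i ((b - a) i) := (Finset.univ_sum_single _).symm
  have hmem : (b - a : Fin m → V) ∈ T := by
    rw [this]; exact AddSubgroup.sum_mem T (fun i _ => hT i _)
  exact hmem
end

section
/- Let G be a finite semiprimitive permutation group on Ω with point stabiliser H and soluble regular normal subgroup K, and let N be a normal subgroup of G contained in K with N ≠ K. Then in the induced (faithful, semiprimitive) action of G/N on the cosets of HN/N, the subgroup K/N is a soluble regular normal subgroup. -/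
open scoped Pointwise


/-- Let `G` be a finite semiprimitive group on `Ω` with point stabiliser `H = G_ω` and
soluble regular normal subgroup `K`, and let `N ⊴ G` with `N ≤ K`, `N ≠ K`. Then, in the
induced action of `G/N` on the cosets of `HN/N`, the subgroup `K/N` is a soluble regular
normal subgroup; expressed in `G`: `K/N` is soluble, `K(HN) = G` (transitivity of `K/N`)
and `K ∩ (HN)^g ≤ N` for all `g` (semiregularity of `K/N`). -/
theorem stmt17 {G Ω : Type*} [Group G] [Finite G] [MulAction G Ω] [FaithfulSMul G Ω]
    (hsp : IsSemiprimitiveAction G Ω) (ω : Ω) (H : Subgroup G)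
    (hH : H = MulAction.stabilizer G ω)
    (K : Subgroup G) [K.Normal] (hsol : IsSolvable K)
    (htrans : K.IsTransitiveOn Ω) (hsreg : K.IsSemiregularOn Ω)
    (N : Subgroup G) [N.Normal] (hNK : N ≤ K) (hne : N ≠ K) :
    IsSolvable (K ⧸ N.subgroupOf K) ∧
    (K ⊔ (H ⊔ N) = ⊤) ∧
    (∀ g : G, K ⊓ (H ⊔ N).map (MulAut.conj g).toMonoidHom ≤ N) := by
  refine ⟨(by haveI : Group.IsSolvable K := hsol; exact (inferInstance : Group.IsSolvable (K ⧸ N.subgroupOf K))), ?_, ?_⟩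
  · rw [eq_top_iff]
    intro g _
    obtain ⟨k, hk, hkω⟩ := htrans ω (g • ω)
    have hst : k⁻¹ * g ∈ H := by
      rw [hH, MulAction.mem_stabilizer_iff, mul_smul, ← hkω, inv_smul_smul]
    have hg : g = k * (k⁻¹ * g) := by group
    rw [hg]
    exact mul_mem (le_sup_left (a := K) (b := H ⊔ N) hk)
      (le_sup_right (a := K) (b := H ⊔ N) (le_sup_left (a := H) (b := N) hst))
  · intro g x hx
    obtain ⟨hxK, y, hy, hxy⟩ := hx
    have hy' : y ∈ (H : Set G) * (N : Set G) := by
      rw [← Subgroup.mul_normal]; exact hy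
    obtain ⟨h, hh, n, hn, rfl⟩ := hy'
    simp only [MulEquiv.coe_toMonoidHom, MulAut.conj_apply] at hxy
    have hgn : g * n * g⁻¹ ∈ N := Subgroup.Normal.conj_mem ‹N.Normal› n hn g
    have hkey : x * (g * n * g⁻¹)⁻¹ ∈ K := mul_mem hxK (inv_mem (hNK hgn))
    have hfix : (x * (g * n * g⁻¹)⁻¹) • (g • ω) = g • ω := by
      have hx' : x * (g * n * g⁻¹)⁻¹ = g * h * g⁻¹ := by
        rw [← hxy]; group
      rw [hx']
      have hhω : h • ω = ω := by
        rw [hH] at hh; exact hh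
      simp [mul_smul, hhω]
    have h1 : x * (g * n * g⁻¹)⁻¹ = 1 := hsreg _ hkey _ hfix
    rw [mul_inv_eq_one.mp h1]; exact hgn
end
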